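/- Under the condition that λ_r ≥ 2‖Ẑ‖ (guaranteed under the hypotheses of Lemma A.2), there exists an absolute constant C₅ such that |⟨ (Θ̂Θ̂ᵀ − ΘΘᵀ) A (Θ̂Θ̂ᵀ − ΘΘᵀ), T̃ ⟩| ≤ C₅ (4/ε²) ‖T‖_F κ σ √(d r log d / n) · (σ/λ_r) √(d log d / n). -/

import Mathlib

open Matrix

noncomputable section

/-- Frobenius (trace) inner product of two real matrices. -/
def mInner {m n : Type*} [Fintype m] [Fintype n] (A B : Matrix m n ℝ) : ℝ :=
  ∑ i, ∑ j, A i j * B i j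

/-- Frobenius norm of a real matrix. -/
def frobNorm {m n : Type*} [Fintype m] [Fintype n] (A : Matrix m n ℝ) : ℝ :=
  Real.sqrt (∑ i, ∑ j, (A i j) ^ 2)

/-- ℓ2→ℓ2 operator (spectral) norm of a real matrix. -/
def opNorm {m n : Type*} [Fintype m] [Fintype n] (A : Matrix m n ℝ) : ℝ :=
  sSup {c | ∃ v : n → ℝ, (∑ j, (v j) ^ 2) ≤ 1 ∧ c = Real.sqrt (∑ i, (A.mulVec v i) ^ 2)}

variable {d1 d2 r : ℕ}

/-- `Θ = blockdiag(U, V)`. -/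
def ThetaMat (U : Matrix (Fin d1) (Fin r) ℝ) (V : Matrix (Fin d2) (Fin r) ℝ) :
    Matrix (Fin d1 ⊕ Fin d2) (Fin r ⊕ Fin r) ℝ :=
  Matrix.fromBlocks U 0 0 V

/-- Symmetric dilation `A = [[0, M],[Mᵀ, 0]]`. -/
def dilation (M : Matrix (Fin d1) (Fin d2) ℝ) :
    Matrix (Fin d1 ⊕ Fin d2) (Fin d1 ⊕ Fin d2) ℝ :=
  Matrix.fromBlocks 0 M Mᵀ 0

/-- `T̃ = [[0, T],[0, 0]]`. -/
def Ttil (T : Matrix (Fin d1) (Fin d2) ℝ) :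
    Matrix (Fin d1 ⊕ Fin d2) (Fin d1 ⊕ Fin d2) ℝ :=
  Matrix.fromBlocks 0 T 0 0

namespace A7

variable {m n p q : Type*} [Fintype m] [Fintype n] [Fintype p] [Fintype q]
set_option linter.unusedSectionVars false

/-- squared euclidean norm -/
def vsq (v : n → ℝ) : ℝ := ∑ j, v j ^ 2

lemma vsq_nonneg (v : n → ℝ) : 0 ≤ vsq v := Finset.sum_nonneg fun _ _ => sq_nonneg _

/-- euclidean norm -/
def en (v : n → ℝ) : ℝ := Real.sqrt (vsq v)

lemma en_nonneg (v : n → ℝ) : 0 ≤ en v := Real.sqrt_nonneg _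

lemma en_sq (v : n → ℝ) : en v ^ 2 = vsq v := Real.sq_sqrt (vsq_nonneg v)

lemma vsq_eq_zero_iff {v : n → ℝ} : vsq v = 0 ↔ v = 0 := by
  constructor
  · intro h; funext j
    have := (Finset.sum_eq_zero_iff_of_nonneg (fun i _ => sq_nonneg (v i))).1 h j (Finset.mem_univ j)
    exact pow_eq_zero_iff (by norm_num) |>.1 this
  · rintro rfl; simp [vsq]

lemma en_eq_zero_iff {v : n → ℝ} : en v = 0 ↔ v = 0 := by
  rw [en, Real.sqrt_eq_zero (vsq_nonneg v), vsq_eq_zero_iff]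

lemma en_zero : en (0 : n → ℝ) = 0 := en_eq_zero_iff.2 rfl

lemma dot_le_en_mul_en (v w : n → ℝ) : v ⬝ᵥ w ≤ en v * en w := by
  simpa [dotProduct, en, vsq] using Real.sum_mul_le_sqrt_mul_sqrt Finset.univ v w

lemma vsq_add (v w : n → ℝ) : vsq (v + w) = vsq v + 2 * (v ⬝ᵥ w) + vsq w := by
  simp only [vsq, dotProduct, Pi.add_apply, Finset.mul_sum, ← Finset.sum_add_distrib]
  congr 1; funext j; ring

lemma en_add_le (v w : n → ℝ) : en (v + w) ≤ en v + en w := by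
  have h : vsq (v + w) ≤ (en v + en w) ^ 2 := by
    rw [vsq_add]
    have := dot_le_en_mul_en v w
    have hv := en_sq v; have hw := en_sq w
    nlinarith
  calc en (v + w) = Real.sqrt (vsq (v + w)) := rfl
    _ ≤ Real.sqrt ((en v + en w) ^ 2) := Real.sqrt_le_sqrt h
    _ = en v + en w := Real.sqrt_sq (by have := en_nonneg v; have := en_nonneg w; linarith)

lemma en_smul (c : ℝ) (v : n → ℝ) : en (c • v) = |c| * en v := by
  have : vsq (c • v) = c ^ 2 * vsq v := by
    simp [vsq, Finset.mul_sum, mul_pow]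
  rw [en, this, Real.sqrt_mul (sq_nonneg c), Real.sqrt_sq_eq_abs]; rfl

lemma vsq_eq_dot (v : n → ℝ) : vsq v = v ⬝ᵥ v := by
  simp [vsq, dotProduct, pow_two]

/-- squared Frobenius norm -/
def fsq (A : Matrix m n ℝ) : ℝ := ∑ i, ∑ j, (A i j) ^ 2

lemma fsq_nonneg (A : Matrix m n ℝ) : 0 ≤ fsq A :=
  Finset.sum_nonneg fun _ _ => Finset.sum_nonneg fun _ _ => sq_nonneg _

lemma frobNorm_eq (A : Matrix m n ℝ) : frobNorm A = Real.sqrt (fsq A) := rfl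

lemma frobNorm_nonneg (A : Matrix m n ℝ) : 0 ≤ frobNorm A := Real.sqrt_nonneg _

lemma frobNorm_sq (A : Matrix m n ℝ) : frobNorm A ^ 2 = fsq A := Real.sq_sqrt (fsq_nonneg A)

lemma fsq_eq_zero_iff {A : Matrix m n ℝ} : fsq A = 0 ↔ A = 0 := by
  constructor
  · intro h; ext i j
    have h1 := (Finset.sum_eq_zero_iff_of_nonneg
      (fun i _ => Finset.sum_nonneg fun j _ => sq_nonneg (A i j))).1 h i (Finset.mem_univ i)
    have h2 := (Finset.sum_eq_zero_iff_of_nonneg (fun j _ => sq_nonneg (A i j))).1 h1 j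
      (Finset.mem_univ j)
    simpa using pow_eq_zero_iff (n := 2) (by norm_num) |>.1 h2
  · rintro rfl; simp [fsq]


/-! ### opNorm API -/

lemma opNorm_set_eq (A : Matrix m n ℝ) :
    {c | ∃ v : n → ℝ, (∑ j, (v j) ^ 2) ≤ 1 ∧ c = Real.sqrt (∑ i, (A.mulVec v i) ^ 2)}
      = {c | ∃ v : n → ℝ, vsq v ≤ 1 ∧ c = en (A *ᵥ v)} := rfl

lemma en_mulVec_le_frob (A : Matrix m n ℝ) (v : n → ℝ) (hv : vsq v ≤ 1) :
    en (A *ᵥ v) ≤ Real.sqrt (fsq A) := by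
  have h : vsq (A *ᵥ v) ≤ fsq A := by
    have : ∀ i, (A.mulVec v i) ^ 2 ≤ (∑ j, A i j ^ 2) * vsq v := by
      intro i
      simpa [Matrix.mulVec, dotProduct, vsq] using
        Finset.sum_mul_sq_le_sq_mul_sq Finset.univ (fun j => A i j) v
    calc vsq (A *ᵥ v) ≤ ∑ i, (∑ j, A i j ^ 2) * vsq v := Finset.sum_le_sum fun i _ => this i
      _ = (fsq A) * vsq v := by rw [fsq, ← Finset.sum_mul]
      _ ≤ fsq A * 1 := by
          exact mul_le_mul_of_nonneg_left hv (fsq_nonneg A)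
      _ = fsq A := mul_one _
  exact Real.sqrt_le_sqrt h

lemma opNorm_bddAbove (A : Matrix m n ℝ) :
    BddAbove {c | ∃ v : n → ℝ, vsq v ≤ 1 ∧ c = en (A *ᵥ v)} := by
  refine ⟨Real.sqrt (fsq A), ?_⟩
  rintro c ⟨v, hv, rfl⟩
  exact en_mulVec_le_frob A v hv

lemma opNorm_nonneg (A : Matrix m n ℝ) : 0 ≤ opNorm A := by
  rw [opNorm, opNorm_set_eq]
  refine le_csSup (opNorm_bddAbove A) ?_
  exact ⟨0, by simp [vsq], by simp [en_zero]⟩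

lemma en_mulVec_le (A : Matrix m n ℝ) (v : n → ℝ) : en (A *ᵥ v) ≤ opNorm A * en v := by
  rcases eq_or_ne (en v) 0 with h0 | h0
  · rw [en_eq_zero_iff.1 h0]
    simp [Matrix.mulVec_zero, en_zero, h0]
  · have hpos : 0 < en v := lt_of_le_of_ne (en_nonneg v) (Ne.symm h0)
    set t : ℝ := (en v)⁻¹ with ht
    have htpos : 0 < t := inv_pos.2 hpos
    have hu : vsq (t • v) ≤ 1 := by
      have : vsq (t • v) = (en (t • v))^2 := (en_sq _).symm
      rw [this, en_smul, abs_of_pos htpos, ht, inv_mul_cancel₀ h0]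
      norm_num
    have hmem : en (A *ᵥ (t • v)) ∈
        {c | ∃ v : n → ℝ, vsq v ≤ 1 ∧ c = en (A *ᵥ v)} := ⟨t • v, hu, rfl⟩
    have hle : en (A *ᵥ (t • v)) ≤ opNorm A := by
      rw [opNorm, opNorm_set_eq]; exact le_csSup (opNorm_bddAbove A) hmem
    have hms : A *ᵥ (t • v) = t • (A *ᵥ v) := by
      rw [Matrix.mulVec_smul]
    rw [hms, en_smul, abs_of_pos htpos] at hle
    calc en (A *ᵥ v) = en v * (t * en (A *ᵥ v)) := by
          rw [ht, ← mul_assoc, mul_inv_cancel₀ h0, one_mul]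
      _ ≤ en v * opNorm A := by
          exact mul_le_mul_of_nonneg_left hle (en_nonneg v)
      _ = opNorm A * en v := mul_comm _ _

lemma opNorm_le {A : Matrix m n ℝ} {c : ℝ} (hc : 0 ≤ c)
    (h : ∀ v, en (A *ᵥ v) ≤ c * en v) : opNorm A ≤ c := by
  rw [opNorm, opNorm_set_eq]
  refine Real.sSup_le ?_ hc
  rintro x ⟨v, hv, rfl⟩
  have hev : en v ≤ 1 := by
    rw [en]
    calc Real.sqrt (vsq v) ≤ Real.sqrt 1 := Real.sqrt_le_sqrt hv
      _ = 1 := Real.sqrt_one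
  calc en (A *ᵥ v) ≤ c * en v := h v
    _ ≤ c * 1 := mul_le_mul_of_nonneg_left hev hc
    _ = c := mul_one c

lemma opNorm_mul_le (A : Matrix m p ℝ) (B : Matrix p n ℝ) :
    opNorm (A * B) ≤ opNorm A * opNorm B := by
  refine opNorm_le (mul_nonneg (opNorm_nonneg A) (opNorm_nonneg B)) fun v => ?_
  rw [← Matrix.mulVec_mulVec]
  calc en (A *ᵥ (B *ᵥ v)) ≤ opNorm A * en (B *ᵥ v) := en_mulVec_le A _
    _ ≤ opNorm A * (opNorm B * en v) :=
        mul_le_mul_of_nonneg_left (en_mulVec_le B v) (opNorm_nonneg A)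
    _ = opNorm A * opNorm B * en v := by ring

lemma opNorm_add_le (A B : Matrix m n ℝ) : opNorm (A + B) ≤ opNorm A + opNorm B := by
  refine opNorm_le (add_nonneg (opNorm_nonneg A) (opNorm_nonneg B)) fun v => ?_
  rw [Matrix.add_mulVec]
  calc en (A *ᵥ v + B *ᵥ v) ≤ en (A *ᵥ v) + en (B *ᵥ v) := en_add_le _ _
    _ ≤ opNorm A * en v + opNorm B * en v :=
        add_le_add (en_mulVec_le A v) (en_mulVec_le B v)
    _ = (opNorm A + opNorm B) * en v := by ring

lemma opNorm_transpose_le (A : Matrix m n ℝ) : opNorm Aᵀ ≤ opNorm A := by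
  refine opNorm_le (opNorm_nonneg A) fun v => ?_
  rcases eq_or_ne (en (Aᵀ *ᵥ v)) 0 with h0 | h0
  · rw [h0]; exact mul_nonneg (opNorm_nonneg A) (en_nonneg v)
  · have hpos : 0 < en (Aᵀ *ᵥ v) := lt_of_le_of_ne (en_nonneg _) (Ne.symm h0)
    have key : en (Aᵀ *ᵥ v) ^ 2 ≤ opNorm A * en v * en (Aᵀ *ᵥ v) := by
      rw [en_sq, vsq_eq_dot]
      have h1 : (Aᵀ *ᵥ v) ⬝ᵥ (Aᵀ *ᵥ v) = v ⬝ᵥ (A *ᵥ (Aᵀ *ᵥ v)) := by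
        rw [Matrix.dotProduct_mulVec v A (Aᵀ *ᵥ v)]
        congr 1
        funext j
        simp [Matrix.vecMul, Matrix.mulVec, dotProduct, Matrix.transpose_apply, mul_comm]
      rw [h1]
      calc v ⬝ᵥ (A *ᵥ (Aᵀ *ᵥ v)) ≤ en v * en (A *ᵥ (Aᵀ *ᵥ v)) := dot_le_en_mul_en _ _
        _ ≤ en v * (opNorm A * en (Aᵀ *ᵥ v)) :=
            mul_le_mul_of_nonneg_left (en_mulVec_le A _) (en_nonneg v)
        _ = opNorm A * en v * en (Aᵀ *ᵥ v) := by ring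
    nlinarith [key, hpos]

lemma opNorm_transpose (A : Matrix m n ℝ) : opNorm Aᵀ = opNorm A :=
  le_antisymm (opNorm_transpose_le A) (by simpa using opNorm_transpose_le Aᵀ)

/-! ### Frobenius / mInner API -/

lemma fsq_cols (A : Matrix m n ℝ) : fsq A = ∑ j, vsq (fun i => A i j) := by
  rw [fsq, Finset.sum_comm]; rfl

lemma col_mul (A : Matrix m p ℝ) (B : Matrix p n ℝ) (j : n) :
    (fun i => (A * B) i j) = A *ᵥ (fun k => B k j) := by
  funext i; simp [Matrix.mul_apply, Matrix.mulVec, dotProduct]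

lemma fsq_mul_le_left (A : Matrix m p ℝ) (B : Matrix p n ℝ) :
    fsq (A * B) ≤ opNorm A ^ 2 * fsq B := by
  rw [fsq_cols, fsq_cols]
  rw [Finset.mul_sum]
  refine Finset.sum_le_sum fun j _ => ?_
  rw [col_mul]
  have h := en_mulVec_le A (fun k => B k j)
  have h2 := en_nonneg (A *ᵥ fun k => B k j)
  have := en_sq (A *ᵥ fun k => B k j)
  have := en_sq (fun k => B k j)
  nlinarith [opNorm_nonneg A, en_nonneg (fun k => B k j)]

lemma fsq_transpose (A : Matrix m n ℝ) : fsq Aᵀ = fsq A := by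
  rw [fsq, fsq, Finset.sum_comm]; rfl

lemma fsq_mul_le_right (A : Matrix m p ℝ) (B : Matrix p n ℝ) :
    fsq (A * B) ≤ fsq A * opNorm B ^ 2 := by
  calc fsq (A * B) = fsq ((A * B)ᵀ) := (fsq_transpose _).symm
    _ = fsq (Bᵀ * Aᵀ) := by rw [Matrix.transpose_mul]
    _ ≤ opNorm Bᵀ ^ 2 * fsq Aᵀ := fsq_mul_le_left _ _
    _ = fsq A * opNorm B ^ 2 := by rw [opNorm_transpose, fsq_transpose]; ring

lemma fsq_le_card_mul_sq [DecidableEq n] (A : Matrix m n ℝ) :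
    fsq A ≤ (Fintype.card n : ℝ) * opNorm A ^ 2 := by
  rw [fsq_cols]
  have hcol : ∀ j : n, vsq (fun i => A i j) ≤ opNorm A ^ 2 := by
    intro j
    have he : (fun i => A i j) = A *ᵥ (fun k => if k = j then 1 else 0) := by
      funext i; simp [Matrix.mulVec, dotProduct]
    have hv : vsq (fun k : n => if k = j then (1:ℝ) else 0) = 1 := by
      simp [vsq]
    have := en_mulVec_le A (fun k => if k = j then 1 else 0)
    rw [← he] at this
    have h1 : en (fun k : n => if k = j then (1:ℝ) else 0) = 1 := by
      rw [en, hv, Real.sqrt_one]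
    rw [h1, mul_one] at this
    calc vsq (fun i => A i j) = en (fun i => A i j) ^ 2 := (en_sq _).symm
      _ ≤ opNorm A ^ 2 := by
          have := en_nonneg (fun i => A i j)
          nlinarith
  calc ∑ j, vsq (fun i => A i j) ≤ ∑ _j : n, opNorm A ^ 2 :=
        Finset.sum_le_sum fun j _ => hcol j
    _ = (Fintype.card n : ℝ) * opNorm A ^ 2 := by
        rw [Finset.sum_const, Finset.card_univ, nsmul_eq_mul]

lemma mInner_self (A : Matrix m n ℝ) : mInner A A = fsq A := by
  simp [mInner, fsq, pow_two]

lemma mInner_comm (A B : Matrix m n ℝ) : mInner A B = mInner B A := by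
  simp [mInner, mul_comm]

lemma abs_mInner_le (A B : Matrix m n ℝ) : |mInner A B| ≤ frobNorm A * frobNorm B := by
  have hsq : (mInner A B) ^ 2 ≤ fsq A * fsq B := by
    have := Finset.sum_mul_sq_le_sq_mul_sq Finset.univ
      (fun p : m × n => A p.1 p.2) (fun p : m × n => B p.1 p.2)
    simpa [mInner, fsq, Fintype.sum_prod_type] using this
  have h1 : |mInner A B| = Real.sqrt ((mInner A B) ^ 2) := (Real.sqrt_sq_eq_abs _).symm
  rw [h1, frobNorm_eq, frobNorm_eq, ← Real.sqrt_mul (fsq_nonneg A)]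
  exact Real.sqrt_le_sqrt hsq

lemma fsq_add (A B : Matrix m n ℝ) :
    fsq (A + B) = fsq A + 2 * mInner A B + fsq B := by
  simp only [fsq, mInner, Matrix.add_apply, Finset.mul_sum, ← Finset.sum_add_distrib]
  congr 1; funext i; congr 1; funext j; ring

lemma mInner_mul_right (X : Matrix m n ℝ) (Y : Matrix m p ℝ) (Z : Matrix p n ℝ) :
    mInner X (Y * Z) = mInner (X * Zᵀ) Y := by
  simp only [mInner, Matrix.mul_apply, Matrix.transpose_apply, Finset.mul_sum,
    Finset.sum_mul]
  refine Finset.sum_congr rfl fun i _ => ?_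
  rw [Finset.sum_comm]
  exact Finset.sum_congr rfl fun k _ => Finset.sum_congr rfl fun j _ => by ring

lemma frob_le_of_fsq_le {A : Matrix m n ℝ} {B : Matrix p q ℝ} (h : fsq A ≤ fsq B) :
    frobNorm A ≤ frobNorm B := Real.sqrt_le_sqrt h

lemma fsq_le_of_frob_le {A : Matrix m n ℝ} {B : Matrix p q ℝ} (h : frobNorm A ≤ frobNorm B) :
    fsq A ≤ fsq B := by
  have := pow_le_pow_left₀ (frobNorm_nonneg A) h 2
  rwa [frobNorm_sq, frobNorm_sq] at this

/-! ### more vector/matrix lemmas -/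

variable [DecidableEq m] [DecidableEq n] [DecidableEq p] [DecidableEq q]

lemma dot_mulVec_mulVec (Q : Matrix m n ℝ) (v w : n → ℝ) :
    (Q *ᵥ v) ⬝ᵥ (Q *ᵥ w) = ((Qᵀ * Q) *ᵥ v) ⬝ᵥ w := by
  rw [Matrix.dotProduct_mulVec (Q *ᵥ v) Q w]
  congr 1
  rw [← Matrix.mulVec_transpose, Matrix.mulVec_mulVec]

lemma vsq_mulVec_colOrtho {Q : Matrix m n ℝ} (h : Qᵀ * Q = 1) (v : n → ℝ) :
    vsq (Q *ᵥ v) = vsq v := by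
  rw [vsq_eq_dot, vsq_eq_dot, dot_mulVec_mulVec, h, Matrix.one_mulVec]

lemma en_mulVec_colOrtho {Q : Matrix m n ℝ} (h : Qᵀ * Q = 1) (v : n → ℝ) :
    en (Q *ᵥ v) = en v := by
  rw [en, vsq_mulVec_colOrtho h]; rfl

lemma opNorm_colOrtho_le {Q : Matrix m n ℝ} (h : Qᵀ * Q = 1) : opNorm Q ≤ 1 := by
  refine opNorm_le zero_le_one fun v => ?_
  rw [en_mulVec_colOrtho h, one_mul]

lemma opNorm_symm_idem_le {E : Matrix n n ℝ} (hsym : Eᵀ = E) (hidem : E * E = E) :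
    opNorm E ≤ 1 := by
  refine opNorm_le zero_le_one fun v => ?_
  rw [one_mul]
  rcases eq_or_ne (en (E *ᵥ v)) 0 with h0 | h0
  · rw [h0]; exact en_nonneg v
  · have hpos : 0 < en (E *ᵥ v) := lt_of_le_of_ne (en_nonneg _) (Ne.symm h0)
    have key : en (E *ᵥ v) ^ 2 ≤ en (E *ᵥ v) * en v := by
      rw [en_sq, vsq_eq_dot, dot_mulVec_mulVec, hsym, hidem]
      exact dot_le_en_mul_en _ _
    nlinarith

lemma vsq_sum_type {v : (m ⊕ n) → ℝ} :
    vsq v = vsq (v ∘ Sum.inl) + vsq (v ∘ Sum.inr) := by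
  rw [vsq, Fintype.sum_sum_type]; rfl

lemma vsq_mulVec_le_of_opNorm_le {A : Matrix m n ℝ} {c : ℝ}
    (h : opNorm A ≤ c) (v : n → ℝ) : vsq (A *ᵥ v) ≤ c ^ 2 * vsq v := by
  have h1 : en (A *ᵥ v) ≤ c * en v :=
    le_trans (en_mulVec_le A v) (mul_le_mul_of_nonneg_right h (en_nonneg v))
  have h2 := pow_le_pow_left₀ (en_nonneg _) h1 2
  rw [en_sq, mul_pow, en_sq] at h2; exact h2

lemma en_le_of_vsq_le {u : m → ℝ} {v : n → ℝ} {c : ℝ} (hc : 0 ≤ c)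
    (h : vsq u ≤ c ^ 2 * vsq v) : en u ≤ c * en v := by
  calc en u = Real.sqrt (vsq u) := rfl
    _ ≤ Real.sqrt (c ^ 2 * vsq v) := Real.sqrt_le_sqrt h
    _ = c * en v := by rw [Real.sqrt_mul (sq_nonneg c), Real.sqrt_sq hc]; rfl

lemma opNorm_offdiag_blocks_le {B : Matrix m n ℝ} {C : Matrix n m ℝ} {c : ℝ} (hc : 0 ≤ c)
    (hB : opNorm B ≤ c) (hC : opNorm C ≤ c) :
    opNorm (Matrix.fromBlocks 0 B C 0) ≤ c := by
  refine opNorm_le hc fun v => ?_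
  refine en_le_of_vsq_le hc ?_
  have hmv : (Matrix.fromBlocks 0 B C 0) *ᵥ v
      = Sum.elim (B *ᵥ (v ∘ Sum.inr)) (C *ᵥ (v ∘ Sum.inl)) := by
    rw [Matrix.fromBlocks_mulVec]
    simp [Matrix.zero_mulVec]
  have h1 : vsq ((Matrix.fromBlocks 0 B C 0) *ᵥ v)
      = vsq (B *ᵥ (v ∘ Sum.inr)) + vsq (C *ᵥ (v ∘ Sum.inl)) := by
    rw [hmv, vsq_sum_type]; rfl
  have hBv := vsq_mulVec_le_of_opNorm_le hB (v ∘ Sum.inr)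
  have hCv := vsq_mulVec_le_of_opNorm_le hC (v ∘ Sum.inl)
  rw [h1, vsq_sum_type (v := v)]
  linarith

lemma opNorm_diagonal_le {w : n → ℝ} {c : ℝ} (hc : 0 ≤ c)
    (h : ∀ i, |w i| ≤ c) : opNorm (Matrix.diagonal w) ≤ c := by
  refine opNorm_le hc fun v => ?_
  refine en_le_of_vsq_le hc ?_
  rw [vsq, vsq, Finset.mul_sum]
  refine Finset.sum_le_sum fun i _ => ?_
  rw [Matrix.mulVec_diagonal]
  have h1 := h i
  have h2 : w i ^ 2 ≤ c ^ 2 := by nlinarith [abs_nonneg (w i), sq_abs (w i)]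
  nlinarith [sq_nonneg (v i), sq_nonneg (w i * v i)]

lemma fsq_diagonal (w : n → ℝ) :
    fsq (Matrix.diagonal w) = ∑ j, w j ^ 2 := by
  rw [fsq]
  refine Finset.sum_congr rfl fun i _ => ?_
  rw [Finset.sum_eq_single i]
  · simp [Matrix.diagonal_apply_eq]
  · intro b _ hb; simp [Matrix.diagonal_apply_ne' _ hb]
  · intro h; exact absurd (Finset.mem_univ i) h

lemma frobNorm_transpose (A : Matrix m n ℝ) : frobNorm Aᵀ = frobNorm A := by
  rw [frobNorm_eq, frobNorm_eq, fsq_transpose]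

lemma frobNorm_add_le (A B : Matrix m n ℝ) : frobNorm (A + B) ≤ frobNorm A + frobNorm B := by
  have h : fsq (A + B) ≤ (frobNorm A + frobNorm B) ^ 2 := by
    rw [fsq_add]
    have h1 := abs_mInner_le A B
    have h2 := (frobNorm_sq A); have h3 := (frobNorm_sq B)
    have := abs_le.1 h1
    nlinarith [frobNorm_nonneg A, frobNorm_nonneg B]
  rw [frobNorm_eq]
  calc Real.sqrt (fsq (A + B)) ≤ Real.sqrt ((frobNorm A + frobNorm B) ^ 2) :=
        Real.sqrt_le_sqrt h
    _ = frobNorm A + frobNorm B :=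
        Real.sqrt_sq (add_nonneg (frobNorm_nonneg A) (frobNorm_nonneg B))

lemma frobNorm_neg (B : Matrix m n ℝ) : frobNorm (-B) = frobNorm B := by
  rw [frobNorm_eq, frobNorm_eq]; congr 1; simp [fsq]

lemma frobNorm_sub_le (A B : Matrix m n ℝ) : frobNorm (A - B) ≤ frobNorm A + frobNorm B := by
  calc frobNorm (A - B) = frobNorm (A + (-B)) := by rw [sub_eq_add_neg]
    _ ≤ frobNorm A + frobNorm (-B) := frobNorm_add_le _ _
    _ = frobNorm A + frobNorm B := by rw [frobNorm_neg]

lemma exists_mulVec_eq_zero {k : Type*} [Fintype k] (N : Matrix m k ℝ)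
    (h : N.rank < Fintype.card k) : ∃ c : k → ℝ, c ≠ 0 ∧ N *ᵥ c = 0 := by
  have hrn := LinearMap.finrank_range_add_finrank_ker N.mulVecLin
  rw [Module.finrank_fintype_fun_eq_card] at hrn
  have hker : LinearMap.ker N.mulVecLin ≠ ⊥ := by
    intro hbot
    rw [hbot, finrank_bot] at hrn
    rw [Matrix.rank] at h
    omega
  obtain ⟨c, hc, hcne⟩ := Submodule.exists_mem_ne_zero_of_ne_bot hker
  exact ⟨c, hcne, by simpa [Matrix.mulVecLin_apply] using hc⟩

/-! ### inner-product transfer and best approximation -/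

lemma mInner_transpose (A B : Matrix m n ℝ) : mInner Aᵀ Bᵀ = mInner A B := by
  rw [mInner, mInner, Finset.sum_comm]; rfl

lemma mInner_zero_left (B : Matrix m n ℝ) : mInner 0 B = 0 := by simp [mInner]

lemma mInner_mul_left (X : Matrix m n ℝ) (Y : Matrix m p ℝ) (Z : Matrix p n ℝ) :
    mInner X (Y * Z) = mInner (Yᵀ * X) Z := by
  rw [← mInner_transpose X (Y * Z), Matrix.transpose_mul, mInner_mul_right,
    Matrix.transpose_transpose, ← mInner_transpose (Yᵀ * X) Z, Matrix.transpose_mul,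
    Matrix.transpose_transpose, mInner_comm]

lemma fsq_sub (A B : Matrix m n ℝ) :
    fsq (A - B) = fsq A - 2 * mInner A B + fsq B := by
  simp only [fsq, mInner, Matrix.sub_apply, Finset.mul_sum, ← Finset.sum_sub_distrib,
    ← Finset.sum_add_distrib]
  congr 1; funext i; congr 1; funext j; ring

section BestApprox

variable {k : Type*} [Fintype k] [DecidableEq k]
variable {r : ℕ} {𝔸 : Matrix m n ℝ} {Uh : Matrix m k ℝ} {Vh : Matrix n k ℝ} {sh : k → ℝ}

lemma bestApprox (hk : Fintype.card k ≤ r)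
    (hUh : Uhᵀ * Uh = 1) (hVh : Vhᵀ * Vh = 1)
    (hmin : ∀ B : Matrix m n ℝ, B.rank ≤ r →
      frobNorm (𝔸 - Uh * Matrix.diagonal sh * Vhᵀ) ≤ frobNorm (𝔸 - B)) :
    𝔸 * (Vh * Vhᵀ) = Uh * Matrix.diagonal sh * Vhᵀ ∧
    (Uh * Uhᵀ) * 𝔸 = Uh * Matrix.diagonal sh * Vhᵀ ∧
    𝔸 * Vh = Uh * Matrix.diagonal sh ∧
    Uhᵀ * 𝔸 = Matrix.diagonal sh * Vhᵀ ∧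
    (∀ G : Matrix n k ℝ, Gᵀ * G = 1 → fsq (𝔸 * G) ≤ ∑ j, sh j ^ 2) := by
  set Bh := Uh * Matrix.diagonal sh * Vhᵀ with hBh
  -- part (i)
  have hi : 𝔸 * (Vh * Vhᵀ) = Bh := by
    set B := 𝔸 * (Vh * Vhᵀ) with hB
    have hrank : B.rank ≤ r :=
      le_trans (Matrix.rank_mul_le_right _ _)
        (le_trans (Matrix.rank_mul_le_left _ _)
          (le_trans (Matrix.rank_le_card_width Vh) hk))
    have hfr : fsq (𝔸 - Bh) ≤ fsq (𝔸 - B) := fsq_le_of_frob_le (hmin B hrank)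
    have hdecomp : 𝔸 - Bh = (𝔸 - B) + (B - Bh) := by abel
    have hBV : (𝔸 - B) * Vh = 0 := by
      rw [Matrix.sub_mul, hB, Matrix.mul_assoc 𝔸 (Vh * Vhᵀ) Vh, Matrix.mul_assoc Vh Vhᵀ Vh,
        hVh, Matrix.mul_one, sub_self]
    have hBBh : B - Bh = (𝔸 * Vh - Uh * Matrix.diagonal sh) * Vhᵀ := by
      rw [Matrix.sub_mul, hB, hBh, Matrix.mul_assoc 𝔸 Vh Vhᵀ]
    have hcross : mInner (𝔸 - B) (B - Bh) = 0 := by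
      rw [hBBh, mInner_mul_right, Matrix.transpose_transpose, hBV, mInner_zero_left]
    have hexp : fsq (𝔸 - Bh) = fsq (𝔸 - B) + 2 * mInner (𝔸 - B) (B - Bh) + fsq (B - Bh) := by
      rw [hdecomp, fsq_add]
    rw [hcross] at hexp
    have hz : fsq (B - Bh) ≤ 0 := by linarith
    have : B - Bh = 0 := fsq_eq_zero_iff.1 (le_antisymm hz (fsq_nonneg _))
    exact sub_eq_zero.1 this
  -- part (ii)
  have hii : (Uh * Uhᵀ) * 𝔸 = Bh := by
    set B := (Uh * Uhᵀ) * 𝔸 with hB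
    have hrank : B.rank ≤ r :=
      le_trans (Matrix.rank_mul_le_left _ _)
        (le_trans (Matrix.rank_mul_le_left _ _)
          (le_trans (Matrix.rank_le_card_width Uh) hk))
    have hfr : fsq (𝔸 - Bh) ≤ fsq (𝔸 - B) := fsq_le_of_frob_le (hmin B hrank)
    have hdecomp : 𝔸 - Bh = (𝔸 - B) + (B - Bh) := by abel
    have hUB : Uhᵀ * (𝔸 - B) = 0 := by
      rw [Matrix.mul_sub, hB, ← Matrix.mul_assoc Uhᵀ (Uh * Uhᵀ) 𝔸,
        ← Matrix.mul_assoc Uhᵀ Uh Uhᵀ, hUh, Matrix.one_mul, sub_self]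
    have hBBh : B - Bh = Uh * (Uhᵀ * 𝔸 - Matrix.diagonal sh * Vhᵀ) := by
      rw [Matrix.mul_sub, hB, hBh, Matrix.mul_assoc, ← Matrix.mul_assoc Uh (Matrix.diagonal sh) Vhᵀ]
    have hcross : mInner (𝔸 - B) (B - Bh) = 0 := by
      rw [hBBh, mInner_mul_left, hUB, mInner_zero_left]
    have hexp : fsq (𝔸 - Bh) = fsq (𝔸 - B) + 2 * mInner (𝔸 - B) (B - Bh) + fsq (B - Bh) := by
      rw [hdecomp, fsq_add]
    rw [hcross] at hexp
    have hz : fsq (B - Bh) ≤ 0 := by linarith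
    have : B - Bh = 0 := fsq_eq_zero_iff.1 (le_antisymm hz (fsq_nonneg _))
    exact sub_eq_zero.1 this
  -- part (iv): 𝔸 * Vh = Uh * diag sh
  have hiv : 𝔸 * Vh = Uh * Matrix.diagonal sh := by
    have h1 : (𝔸 * (Vh * Vhᵀ)) * Vh = Bh * Vh := by rw [hi]
    rw [Matrix.mul_assoc 𝔸 (Vh * Vhᵀ) Vh, Matrix.mul_assoc Vh Vhᵀ Vh, hVh, Matrix.mul_one] at h1
    rw [hBh, Matrix.mul_assoc (Uh * Matrix.diagonal sh) Vhᵀ Vh, hVh, Matrix.mul_one] at h1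
    exact h1
  -- part (v): Uhᵀ * 𝔸 = diag sh * Vhᵀ
  have hv : Uhᵀ * 𝔸 = Matrix.diagonal sh * Vhᵀ := by
    have h1 : Uhᵀ * ((Uh * Uhᵀ) * 𝔸) = Uhᵀ * Bh := by rw [hii]
    rw [← Matrix.mul_assoc Uhᵀ (Uh * Uhᵀ) 𝔸, ← Matrix.mul_assoc Uhᵀ Uh Uhᵀ, hUh,
      Matrix.one_mul] at h1
    rw [hBh, ← Matrix.mul_assoc Uhᵀ (Uh * Matrix.diagonal sh) Vhᵀ,
      ← Matrix.mul_assoc Uhᵀ Uh (Matrix.diagonal sh), hUh, Matrix.one_mul] at h1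
    exact h1
  -- fsq (𝔸 * Vh) = ∑ sh²
  have hfsqAVh : fsq (𝔸 * Vh) = ∑ j, sh j ^ 2 := by
    rw [hiv, ← mInner_self, mInner_mul_left, ← Matrix.mul_assoc, hUh, Matrix.one_mul,
      mInner_self, fsq_diagonal]
  -- part (iii)
  have hiii : ∀ G : Matrix n k ℝ, Gᵀ * G = 1 → fsq (𝔸 * G) ≤ ∑ j, sh j ^ 2 := by
    intro G hG
    set B := 𝔸 * (G * Gᵀ) with hB
    have hrank : B.rank ≤ r :=
      le_trans (Matrix.rank_mul_le_right _ _)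
        (le_trans (Matrix.rank_mul_le_left _ _)
          (le_trans (Matrix.rank_le_card_width G) hk))
    have hfr : fsq (𝔸 - Bh) ≤ fsq (𝔸 - B) := fsq_le_of_frob_le (hmin B hrank)
    have hkey1 : mInner 𝔸 B = fsq (𝔸 * G) := by
      rw [hB, ← Matrix.mul_assoc, mInner_mul_right, Matrix.transpose_transpose, mInner_self]
    have hkey2 : fsq B = fsq (𝔸 * G) := by
      rw [hB, ← mInner_self, ← Matrix.mul_assoc, mInner_mul_right, Matrix.transpose_transpose,
        Matrix.mul_assoc (𝔸 * G) Gᵀ G, hG, Matrix.mul_one, mInner_self]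
    have hexpB : fsq (𝔸 - B) = fsq 𝔸 - fsq (𝔸 * G) := by
      rw [fsq_sub, hkey1, hkey2]; ring
    have hexpBh : fsq (𝔸 - Bh) = fsq 𝔸 - fsq (𝔸 * Vh) := by
      have hkey1' : mInner 𝔸 Bh = fsq (𝔸 * Vh) := by
        rw [← hi, ← Matrix.mul_assoc, mInner_mul_right, Matrix.transpose_transpose, mInner_self]
      have hkey2' : fsq Bh = fsq (𝔸 * Vh) := by
        rw [← hi, ← mInner_self, ← Matrix.mul_assoc, mInner_mul_right,
          Matrix.transpose_transpose, Matrix.mul_assoc (𝔸 * Vh) Vhᵀ Vh, hVh,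
          Matrix.mul_one, mInner_self]
      rw [fsq_sub, hkey1', hkey2']; ring
    rw [hexpB, hexpBh, hfsqAVh] at hfr
    linarith
  exact ⟨hi, hii, hiv, hv, hiii⟩

end BestApprox

/-! ### core singular-vector lemmas -/

lemma vsq_smul (c : ℝ) (v : n → ℝ) : vsq (c • v) = c ^ 2 * vsq v := by
  simp [vsq, Finset.mul_sum, mul_pow]

lemma en_neg (v : n → ℝ) : en (-v) = en v := by
  unfold en vsq; congr 1; simp

lemma en_sub_le (u v : n → ℝ) : en (u - v) ≤ en u + en v := by
  rw [sub_eq_add_neg]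
  calc en (u + -v) ≤ en u + en (-v) := en_add_le _ _
    _ = en u + en v := by rw [en_neg]

lemma en_ge_of_vsq_ge {u : m → ℝ} {v : n → ℝ} {c : ℝ} (hc : 0 ≤ c)
    (h : c ^ 2 * vsq v ≤ vsq u) : c * en v ≤ en u := by
  have : Real.sqrt (c ^ 2 * vsq v) ≤ Real.sqrt (vsq u) := Real.sqrt_le_sqrt h
  rwa [Real.sqrt_mul (sq_nonneg c), Real.sqrt_sq hc] at this

lemma ortho_entry {k : Type*} [Fintype k] [DecidableEq k] {Q : Matrix m k ℝ}
    (h : Qᵀ * Q = 1) (a b : k) :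
    ∑ i, Q i a * Q i b = if a = b then 1 else 0 := by
  have := congrFun (congrFun h a) b
  simpa [Matrix.mul_apply, Matrix.one_apply, Matrix.transpose_apply] using this

section Core

variable {k : Type*} [Fintype k] [DecidableEq k]
variable {𝔸 M Zhat : Matrix m n ℝ} {Uh U : Matrix m k ℝ} {Vh V : Matrix n k ℝ}
  {sh sval : k → ℝ} {lamr : ℝ}

lemma claimS (hUh : Uhᵀ * Uh = 1) (hVh : Vhᵀ * Vh = 1)
    (hiv : 𝔸 * Vh = Uh * Matrix.diagonal sh)
    (hiii : ∀ G : Matrix n k ℝ, Gᵀ * G = 1 → fsq (𝔸 * G) ≤ ∑ j, sh j ^ 2)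
    (j : k) (x : n → ℝ) (hx : vsq x = 1)
    (hperp : ∀ l, l ≠ j → ∑ i, Vh i l * x i = 0) :
    vsq (𝔸 *ᵥ x) ≤ sh j ^ 2 := by
  classical
  set G := Matrix.updateCol Vh j x with hGdef
  have hGapp : ∀ i l, G i l = if l = j then x i else Vh i l := by
    intro i l; rw [hGdef, Matrix.updateCol_apply]
  have hG : Gᵀ * G = 1 := by
    ext a b
    have hsum : (Gᵀ * G) a b = ∑ i, G i a * G i b := by
      simp [Matrix.mul_apply, Matrix.transpose_apply]
    rw [hsum, Matrix.one_apply]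
    rcases eq_or_ne a j with ha | ha
    · rcases eq_or_ne b j with hb | hb
      · subst ha; subst hb
        simp only [hGapp, if_pos rfl, if_pos]
        simpa [vsq, pow_two] using hx
      · subst ha
        have h0 := hperp b hb
        rw [if_neg (fun hc => hb hc.symm)]
        simp only [hGapp, if_pos rfl, if_neg hb]
        rw [← h0]
        exact Finset.sum_congr rfl fun i _ => mul_comm _ _
    · rcases eq_or_ne b j with hb | hb
      · subst hb
        have h0 := hperp a ha
        rw [if_neg ha]
        simp only [hGapp, if_pos rfl, if_neg ha]
        exact h0
      · rw [if_congr (Iff.rfl) rfl rfl]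
        simp only [hGapp, if_neg ha, if_neg hb]
        exact ortho_entry hVh a b
  have hfsq := hiii G hG
  have hcols : fsq (𝔸 * G) = ∑ l, vsq (𝔸 *ᵥ fun i => G i l) := by
    rw [fsq_cols]; exact Finset.sum_congr rfl fun l _ => by rw [col_mul]
  have hcolj : (fun i => G i j) = x := by
    funext i; rw [hGapp, if_pos rfl]
  have hcol_ne : ∀ l, l ≠ j → vsq (𝔸 *ᵥ fun i => G i l) = sh l ^ 2 := by
    intro l hl
    have hcl : (fun i => G i l) = fun i => Vh i l := by
      funext i; rw [hGapp, if_neg hl]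
    rw [hcl]
    have h1 : (𝔸 *ᵥ fun i => Vh i l) = fun i' => Uh i' l * sh l := by
      rw [← col_mul 𝔸 Vh l, hiv]
      funext i'
      exact Matrix.mul_diagonal sh Uh i' l
    rw [h1]
    have h2 : ∑ i', Uh i' l * Uh i' l = 1 := by simpa using ortho_entry hUh l l
    calc vsq (fun i' => Uh i' l * sh l) = ∑ i', (Uh i' l * sh l) ^ 2 := rfl
      _ = sh l ^ 2 * ∑ i', Uh i' l * Uh i' l := by
          rw [Finset.mul_sum]; exact Finset.sum_congr rfl fun i' _ => by ring
      _ = sh l ^ 2 := by rw [h2, mul_one]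
  have hsplit : ∑ l, vsq (𝔸 *ᵥ fun i => G i l)
      = vsq (𝔸 *ᵥ x) + ∑ l ∈ Finset.univ.erase j, sh l ^ 2 := by
    rw [← Finset.add_sum_erase _ _ (Finset.mem_univ j), hcolj]
    congr 1
    exact Finset.sum_congr rfl fun l hl => hcol_ne l (Finset.ne_of_mem_erase hl)
  have hsplit2 : ∑ l, sh l ^ 2 = sh j ^ 2 + ∑ l ∈ Finset.univ.erase j, sh l ^ 2 :=
    (Finset.add_sum_erase _ _ (Finset.mem_univ j)).symm
  rw [hcols, hsplit, hsplit2] at hfsq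
  linarith

lemma sh_lower (hU : Uᵀ * U = 1) (hV : Vᵀ * V = 1)
    (hM : M = U * Matrix.diagonal sval * Vᵀ)
    (hsval : ∀ t, lamr ≤ sval t) (hlamr : 0 < lamr)
    (hz2 : 2 * opNorm Zhat ≤ lamr) (h𝔸 : 𝔸 = M + Zhat)
    (hUh : Uhᵀ * Uh = 1) (hVh : Vhᵀ * Vh = 1)
    (hiv : 𝔸 * Vh = Uh * Matrix.diagonal sh)
    (hiii : ∀ G : Matrix n k ℝ, Gᵀ * G = 1 → fsq (𝔸 * G) ≤ ∑ j, sh j ^ 2)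
    (j : k) : lamr / 2 ≤ |sh j| := by
  classical
  -- find a unit vector in the span of V orthogonal to the columns of Vh other than j
  set N' : Matrix {l : k // l ≠ j} k ℝ := Matrix.of fun l w => ∑ i, Vh i l.1 * V i w with hN'
  have hcard : Fintype.card {l : k // l ≠ j} < Fintype.card k :=
    Fintype.card_subtype_lt (x := j) (by simp)
  have hrank : N'.rank < Fintype.card k :=
    lt_of_le_of_lt (Matrix.rank_le_card_height N') hcard
  obtain ⟨w, hw0, hwN⟩ := exists_mulVec_eq_zero N' hrank
  have hperp0 : ∀ l, (hl : l ≠ j) → ∑ i, Vh i l * (V *ᵥ w) i = 0 := by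
    intro l hl
    have h1 := congrFun hwN ⟨l, hl⟩
    have h2 : ∑ t, (∑ i, Vh i l * V i t) * w t = 0 := by
      simpa [Matrix.mulVec, dotProduct, hN'] using h1
    have h3 : ∑ t, (∑ i, Vh i l * V i t) * w t = ∑ i, Vh i l * (V *ᵥ w) i := by
      simp only [Matrix.mulVec, dotProduct, Finset.sum_mul, Finset.mul_sum]
      rw [Finset.sum_comm]
      exact Finset.sum_congr rfl fun i _ => Finset.sum_congr rfl fun t _ => by ring
    rw [← h3, h2]
  have hew : 0 < en w := by
    rcases lt_or_eq_of_le (en_nonneg w) with h | h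
    · exact h
    · exact absurd (en_eq_zero_iff.1 h.symm) hw0
  set x : n → ℝ := (en w)⁻¹ • (V *ᵥ w) with hxdef
  have henx : en x = 1 := by
    rw [hxdef, en_smul, en_mulVec_colOrtho hV, abs_of_pos (inv_pos.2 hew),
      inv_mul_cancel₀ (ne_of_gt hew)]
  have hvx : vsq x = 1 := by rw [← en_sq, henx, one_pow]
  have hperps : ∀ l, l ≠ j → ∑ i, Vh i l * x i = 0 := by
    intro l hl
    have h0 := hperp0 l hl
    calc ∑ i, Vh i l * x i = (en w)⁻¹ * ∑ i, Vh i l * (V *ᵥ w) i := by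
          rw [Finset.mul_sum]
          exact Finset.sum_congr rfl fun i _ => by
            rw [hxdef]; simp [Pi.smul_apply, smul_eq_mul]; ring
      _ = 0 := by rw [h0, mul_zero]
  have hS := claimS hUh hVh hiv hiii j x hvx hperps
  have hup : en (𝔸 *ᵥ x) ≤ |sh j| := by
    have := Real.sqrt_le_sqrt hS
    rwa [Real.sqrt_sq_eq_abs] at this
  -- lower bound on en (𝔸 *ᵥ x)
  have hMV : M * V = U * Matrix.diagonal sval := by
    rw [hM, Matrix.mul_assoc (U * Matrix.diagonal sval) Vᵀ V, hV, Matrix.mul_one]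
  have hMx : M *ᵥ x = (en w)⁻¹ • (U *ᵥ (Matrix.diagonal sval *ᵥ w)) := by
    rw [hxdef, Matrix.mulVec_smul, Matrix.mulVec_mulVec, hMV, ← Matrix.mulVec_mulVec]
  have hdw : lamr ^ 2 * vsq w ≤ vsq (Matrix.diagonal sval *ᵥ w) := by
    rw [vsq, vsq, Finset.mul_sum]
    refine Finset.sum_le_sum fun t _ => ?_
    rw [Matrix.mulVec_diagonal]
    have h1 := hsval t
    nlinarith [sq_nonneg (w t), mul_self_le_mul_self hlamr.le h1]
  have hMxlow : lamr ≤ en (M *ᵥ x) := by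
    have h1 : lamr * en w ≤ en (Matrix.diagonal sval *ᵥ w) := en_ge_of_vsq_ge hlamr.le hdw
    have h2 : en (M *ᵥ x) = (en w)⁻¹ * en (Matrix.diagonal sval *ᵥ w) := by
      rw [hMx, en_smul, abs_of_pos (inv_pos.2 hew), en_mulVec_colOrtho hU]
    rw [h2, ← mul_le_mul_iff_left₀ hew]
    calc lamr * en w ≤ en (Matrix.diagonal sval *ᵥ w) := h1
      _ = (en w)⁻¹ * en (Matrix.diagonal sval *ᵥ w) * en w := by field_simp
  have hZx : en (Zhat *ᵥ x) ≤ opNorm Zhat := by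
    have := en_mulVec_le Zhat x
    rwa [henx, mul_one] at this
  have hMsub : M *ᵥ x = 𝔸 *ᵥ x - Zhat *ᵥ x := by
    rw [h𝔸, Matrix.add_mulVec]; abel
  have hMup : en (M *ᵥ x) ≤ en (𝔸 *ᵥ x) + opNorm Zhat := by
    rw [hMsub]
    exact le_trans (en_sub_le _ _) (by linarith [hZx])
  linarith [hup, hMxlow, hMup]

set_option maxHeartbeats 1000000 in
lemma residual_opNorm_le (hU : Uᵀ * U = 1) (hV : Vᵀ * V = 1)
    (hM : M = U * Matrix.diagonal sval * Vᵀ) (h𝔸 : 𝔸 = M + Zhat)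
    (hUh : Uhᵀ * Uh = 1) (hVh : Vhᵀ * Vh = 1)
    (hiv : 𝔸 * Vh = Uh * Matrix.diagonal sh)
    (hv : Uhᵀ * 𝔸 = Matrix.diagonal sh * Vhᵀ)
    (hiii : ∀ G : Matrix n k ℝ, Gᵀ * G = 1 → fsq (𝔸 * G) ≤ ∑ j, sh j ^ 2) :
    opNorm (𝔸 - 𝔸 * (Vh * Vhᵀ)) ≤ opNorm Zhat := by
  classical
  refine opNorm_le (opNorm_nonneg Zhat) fun v => ?_
  have hw0 : (𝔸 - 𝔸 * (Vh * Vhᵀ)) *ᵥ v = 𝔸 *ᵥ ((1 - Vh * Vhᵀ) *ᵥ v) := by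
    rw [Matrix.sub_mulVec, Matrix.sub_mulVec, Matrix.one_mulVec, Matrix.mulVec_sub,
      Matrix.mulVec_mulVec]
  set w : n → ℝ := (1 - Vh * Vhᵀ) *ᵥ v with hwdef
  -- contraction
  have hPP : (Vh * Vhᵀ) * (Vh * Vhᵀ) = Vh * Vhᵀ := by
    rw [Matrix.mul_assoc Vh Vhᵀ (Vh * Vhᵀ), ← Matrix.mul_assoc Vhᵀ Vh Vhᵀ, hVh, Matrix.one_mul]
  have hsymE : (1 - Vh * Vhᵀ)ᵀ = 1 - Vh * Vhᵀ := by
    rw [Matrix.transpose_sub, Matrix.transpose_one, Matrix.transpose_mul,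
      Matrix.transpose_transpose]
  have hidemE : (1 - Vh * Vhᵀ) * (1 - Vh * Vhᵀ) = 1 - Vh * Vhᵀ := by
    rw [Matrix.mul_sub, Matrix.mul_one, Matrix.sub_mul, Matrix.one_mul, hPP]
    abel
  have hwv : en w ≤ en v := by
    have h1 := en_mulVec_le (1 - Vh * Vhᵀ) v
    have h2 := opNorm_symm_idem_le hsymE hidemE
    calc en w ≤ opNorm (1 - Vh * Vhᵀ) * en v := h1
      _ ≤ 1 * en v := mul_le_mul_of_nonneg_right h2 (en_nonneg v)
      _ = en v := one_mul _
  have hperpw : Vhᵀ *ᵥ w = 0 := by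
    have h1 : Vhᵀ * (1 - Vh * Vhᵀ) = 0 := by
      rw [Matrix.mul_sub, Matrix.mul_one, ← Matrix.mul_assoc, hVh, Matrix.one_mul, sub_self]
    rw [hwdef, Matrix.mulVec_mulVec, h1, Matrix.zero_mulVec]
  rw [hw0]
  rcases eq_or_ne w 0 with hw | hw
  · rw [hw, Matrix.mulVec_zero, en_zero]
    exact mul_nonneg (opNorm_nonneg Zhat) (en_nonneg v)
  · have hew : 0 < en w := lt_of_le_of_ne (en_nonneg w) (fun h => hw (en_eq_zero_iff.1 h.symm))
    set x : n → ℝ := (en w)⁻¹ • w with hxdef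
    have henx : en x = 1 := by
      rw [hxdef, en_smul, abs_of_pos (inv_pos.2 hew), inv_mul_cancel₀ (ne_of_gt hew)]
    have hvx : vsq x = 1 := by rw [← en_sq, henx, one_pow]
    have hperpx : Vhᵀ *ᵥ x = 0 := by
      rw [hxdef, Matrix.mulVec_smul, hperpw, smul_zero]
    have hperpl : ∀ l, ∑ i, Vh i l * x i = 0 := by
      intro l
      have := congrFun hperpx l
      simpa [Matrix.mulVec, dotProduct, Matrix.transpose_apply] using this
    have hS : ∀ t, vsq (𝔸 *ᵥ x) ≤ sh t ^ 2 := fun t =>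
      claimS hUh hVh hiv hiii t x hvx (fun l _ => hperpl l)
    -- the key claim : vsq (𝔸 *ᵥ x) ≤ (opNorm Zhat) ^ 2
    have hkey : vsq (𝔸 *ᵥ x) ≤ opNorm Zhat ^ 2 := by
      set N : Matrix n (k ⊕ Unit) ℝ :=
        Matrix.of fun i t => Sum.elim (fun a => Vh i a) (fun _ => x i) t with hN
      have hrankM : M.rank ≤ Fintype.card k := by
        rw [hM]
        exact le_trans (Matrix.rank_mul_le_left _ _) (Matrix.rank_le_card_width _)
      have hrank : (M * N).rank < Fintype.card (k ⊕ Unit) := by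
        have h1 : Fintype.card (k ⊕ Unit) = Fintype.card k + 1 := by
          simp [Fintype.card_sum]
        rw [h1]
        exact lt_of_le_of_lt (le_trans (Matrix.rank_mul_le_left M N) hrankM) (Nat.lt_succ_self _)
      obtain ⟨c, hc0, hcN⟩ := exists_mulVec_eq_zero (M * N) hrank
      set y : n → ℝ := N *ᵥ c with hydef
      have hMy : M *ᵥ y = 0 := by
        rw [hydef, Matrix.mulVec_mulVec]; exact hcN
      set a : k → ℝ := fun t => c (Sum.inl t) with hadef
      set b : ℝ := c (Sum.inr ()) with hbdef
      have hy : y = Vh *ᵥ a + b • x := by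
        funext i
        rw [hydef]
        show ∑ t, N i t * c t = (Vh *ᵥ a) i + (b • x) i
        rw [Fintype.sum_sum_type]
        simp only [hN, Matrix.of_apply, Sum.elim_inl, Sum.elim_inr, Finset.univ_unique,
          Finset.sum_singleton]
        simp [Matrix.mulVec, dotProduct, hadef, hbdef, Pi.smul_apply, smul_eq_mul, mul_comm]
      have hcross1 : (Vh *ᵥ a) ⬝ᵥ x = 0 := by
        rw [dotProduct_comm, Matrix.dotProduct_mulVec, ← Matrix.mulVec_transpose, hperpx,
          zero_dotProduct]
      have hvsqy : vsq y = vsq a + b ^ 2 := by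
        rw [hy, vsq_add, vsq_mulVec_colOrtho hVh, dotProduct_smul, hcross1, vsq_smul, hvx]
        simp
      have h𝔸y : 𝔸 *ᵥ y = Uh *ᵥ (Matrix.diagonal sh *ᵥ a) + b • (𝔸 *ᵥ x) := by
        rw [hy, Matrix.mulVec_add, Matrix.mulVec_smul, Matrix.mulVec_mulVec, hiv,
          ← Matrix.mulVec_mulVec]
      have hcross2 : (Uh *ᵥ (Matrix.diagonal sh *ᵥ a)) ⬝ᵥ (𝔸 *ᵥ x) = 0 := by
        rw [dotProduct_comm, Matrix.dotProduct_mulVec, ← Matrix.mulVec_transpose,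
          Matrix.mulVec_mulVec, hv, ← Matrix.mulVec_mulVec, hperpx, Matrix.mulVec_zero,
          zero_dotProduct]
      have hvsq𝔸y : vsq (𝔸 *ᵥ y) = vsq (Matrix.diagonal sh *ᵥ a) + b ^ 2 * vsq (𝔸 *ᵥ x) := by
        rw [h𝔸y, vsq_add, vsq_mulVec_colOrtho hUh, dotProduct_smul, hcross2, vsq_smul]
        simp
      have hdiag : vsq (𝔸 *ᵥ x) * vsq a ≤ vsq (Matrix.diagonal sh *ᵥ a) := by
        rw [vsq, vsq, Finset.mul_sum]
        refine Finset.sum_le_sum fun t _ => ?_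
        rw [Matrix.mulVec_diagonal]
        have h1 := hS t
        have h2 := mul_le_mul_of_nonneg_right h1 (sq_nonneg (a t))
        calc vsq (𝔸 *ᵥ x) * a t ^ 2 ≤ sh t ^ 2 * a t ^ 2 := h2
          _ = (sh t * a t) ^ 2 := by ring
      have hsub : vsq (𝔸 *ᵥ x) * vsq y ≤ vsq (𝔸 *ᵥ y) := by
        rw [hvsqy, hvsq𝔸y]
        calc vsq (𝔸 *ᵥ x) * (vsq a + b ^ 2)
            = vsq (𝔸 *ᵥ x) * vsq a + b ^ 2 * vsq (𝔸 *ᵥ x) := by ring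
          _ ≤ vsq (Matrix.diagonal sh *ᵥ a) + b ^ 2 * vsq (𝔸 *ᵥ x) := by linarith [hdiag]
      have h𝔸yZ : 𝔸 *ᵥ y = Zhat *ᵥ y := by
        rw [h𝔸, Matrix.add_mulVec, hMy, zero_add]
      have hZy : vsq (Zhat *ᵥ y) ≤ opNorm Zhat ^ 2 * vsq y :=
        vsq_mulVec_le_of_opNorm_le le_rfl y
      have hypos : 0 < vsq y := by
        have h1 : vsq y = vsq c := by
          rw [hvsqy, vsq_sum_type (v := c)]
          congr 1
          simp [vsq, hbdef]
        rw [h1]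
        rcases lt_or_eq_of_le (vsq_nonneg c) with h | h
        · exact h
        · exact absurd (vsq_eq_zero_iff.1 h.symm) hc0
      rw [← h𝔸yZ] at hZy
      exact le_of_mul_le_mul_right (le_trans hsub hZy) hypos
    -- conclude
    have hwx : w = en w • x := by
      rw [hxdef, smul_smul, mul_inv_cancel₀ (ne_of_gt hew), one_smul]
    have h𝔸w : en (𝔸 *ᵥ w) = en w * en (𝔸 *ᵥ x) := by
      conv_lhs => rw [hwx]
      rw [Matrix.mulVec_smul, en_smul, abs_of_pos hew]
    have h𝔸x : en (𝔸 *ᵥ x) ≤ opNorm Zhat := by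
      have := Real.sqrt_le_sqrt hkey
      rwa [Real.sqrt_sq (opNorm_nonneg Zhat)] at this
    rw [h𝔸w]
    calc en w * en (𝔸 *ᵥ x) ≤ en w * opNorm Zhat :=
          mul_le_mul_of_nonneg_left h𝔸x (en_nonneg w)
      _ = opNorm Zhat * en w := mul_comm _ _
      _ ≤ opNorm Zhat * en v := mul_le_mul_of_nonneg_left hwv (opNorm_nonneg Zhat)

end Core

/-! ### last helpers -/

lemma opNorm_neg (A : Matrix m n ℝ) : opNorm (-A) = opNorm A := by
  have h : ∀ B : Matrix m n ℝ, opNorm (-B) ≤ opNorm B := by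
    intro B
    refine opNorm_le (opNorm_nonneg B) fun v => ?_
    rw [Matrix.neg_mulVec, en_neg]
    exact en_mulVec_le B v
  refine le_antisymm (h A) ?_
  have := h (-A)
  rwa [neg_neg] at this

lemma opNorm_sub_le (A B : Matrix m n ℝ) : opNorm (A - B) ≤ opNorm A + opNorm B := by
  rw [sub_eq_add_neg]
  calc opNorm (A + -B) ≤ opNorm A + opNorm (-B) := opNorm_add_le _ _
    _ = opNorm A + opNorm B := by rw [opNorm_neg]

lemma frobNorm_mul_le_left (A : Matrix m p ℝ) (B : Matrix p n ℝ) :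
    frobNorm (A * B) ≤ opNorm A * frobNorm B := by
  have h := fsq_mul_le_left A B
  have := Real.sqrt_le_sqrt h
  rwa [← frobNorm_eq, Real.sqrt_mul (sq_nonneg _), Real.sqrt_sq (opNorm_nonneg A),
    ← frobNorm_eq] at this

lemma frobNorm_mul_le_right (A : Matrix m p ℝ) (B : Matrix p n ℝ) :
    frobNorm (A * B) ≤ frobNorm A * opNorm B := by
  have h := fsq_mul_le_right A B
  have := Real.sqrt_le_sqrt h
  rwa [← frobNorm_eq, Real.sqrt_mul (fsq_nonneg _), Real.sqrt_sq (opNorm_nonneg B),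
    ← frobNorm_eq] at this

lemma frobNorm_le_sqrt_card_mul (A : Matrix m n ℝ) :
    frobNorm A ≤ Real.sqrt (Fintype.card n) * opNorm A := by
  have h := fsq_le_card_mul_sq A
  have := Real.sqrt_le_sqrt h
  rwa [← frobNorm_eq, Real.sqrt_mul (by positivity), Real.sqrt_sq (opNorm_nonneg A)] at this

lemma proj_symm (Q : Matrix m k' ℝ) [Fintype k'] : (Q * Qᵀ)ᵀ = Q * Qᵀ := by
  rw [Matrix.transpose_mul, Matrix.transpose_transpose]

lemma proj_idem {k' : Type*} [Fintype k'] [DecidableEq k'] {Q : Matrix m k' ℝ} (h : Qᵀ * Q = 1) :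
    (Q * Qᵀ) * (Q * Qᵀ) = Q * Qᵀ := by
  rw [Matrix.mul_assoc Q Qᵀ (Q * Qᵀ), ← Matrix.mul_assoc Qᵀ Q Qᵀ, h, Matrix.one_mul]


lemma oneSub_proj_symm {k' : Type*} [Fintype k'] (Q : Matrix m k' ℝ) :
    (1 - Q * Qᵀ)ᵀ = 1 - Q * Qᵀ := by
  rw [Matrix.transpose_sub, Matrix.transpose_one, proj_symm]

lemma oneSub_proj_idem {k' : Type*} [Fintype k'] [DecidableEq k'] {Q : Matrix m k' ℝ} (h : Qᵀ * Q = 1) :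
    (1 - Q * Qᵀ) * (1 - Q * Qᵀ) = 1 - Q * Qᵀ := by
  rw [Matrix.mul_sub, Matrix.mul_one, Matrix.sub_mul, Matrix.one_mul, proj_idem h]
  abel

lemma opNorm_oneSub_proj_le {k' : Type*} [Fintype k'] [DecidableEq k'] {Q : Matrix m k' ℝ} (h : Qᵀ * Q = 1) :
    opNorm (1 - Q * Qᵀ) ≤ 1 :=
  opNorm_symm_idem_le (oneSub_proj_symm Q) (oneSub_proj_idem h)

end A7

set_option maxHeartbeats 3000000 in
/-- **Lemma A.7 (quadratic term of the spectral projection perturbation).**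
With `‖M‖ = 1`, `κ = 1/λ_r`, `λ_r ≥ 2‖Ẑ‖` and `‖Ẑ‖ ≤ C₁(2/ε)σ√(d log d/n)` (the event of
Lemma A.1), and with `Θ̂ = blockdiag(Û, V̂)` built from the top-r singular vectors of
`M̂^unbs_n = M + Ẑ`, there is an absolute constant `C₅` such that
`|⟨(Θ̂Θ̂ᵀ − ΘΘᵀ) A (Θ̂Θ̂ᵀ − ΘΘᵀ), T̃⟩|
  ≤ C₅ (4/ε²) ‖T‖_F κ σ √(d r log d/n) (σ/λ_r) √(d log d/n)`. -/
theorem quadratic_spectral_perturbation_bound :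
    ∀ C₁ : ℝ, 0 < C₁ → ∃ C₅ : ℝ, 0 < C₅ ∧
    ∀ (d1 d2 r n : ℕ) (ε σ lamr κ : ℝ)
      (M T Zhat : Matrix (Fin d1) (Fin d2) ℝ)
      (U : Matrix (Fin d1) (Fin r) ℝ) (V : Matrix (Fin d2) (Fin r) ℝ) (sval : Fin r → ℝ)
      (Uh : Matrix (Fin d1) (Fin r) ℝ) (Vh : Matrix (Fin d2) (Fin r) ℝ) (sh : Fin r → ℝ),
      0 < d1 → 0 < d2 → 0 < r → 0 < n → 0 < ε → ε < 1 → 0 < σ → 0 < lamr →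
      -- rank-r SVD structure of `M` with `‖M‖ = 1` and `κ = 1/λ_r`
      Uᵀ * U = 1 → Vᵀ * V = 1 →
      M = U * Matrix.diagonal sval * Vᵀ →
      (∀ j, lamr ≤ sval j ∧ sval j ≤ 1) → opNorm M = 1 → κ = 1 / lamr →
      -- `Û, V̂` are the top-r singular vectors of `M̂^unbs_n = M + Ẑ`
      Uhᵀ * Uh = 1 → Vhᵀ * Vh = 1 →
      (∀ B : Matrix (Fin d1) (Fin d2) ℝ, B.rank ≤ r →
        frobNorm ((M + Zhat) - Uh * Matrix.diagonal sh * Vhᵀ) ≤ frobNorm ((M + Zhat) - B)) →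
      -- conditions of Lemma A.2 and the quantitative event of Lemma A.1
      2 * opNorm Zhat ≤ lamr →
      opNorm Zhat ≤ C₁ * (2 / ε) * σ *
        Real.sqrt ((max d1 d2 : ℝ) * Real.log (max d1 d2 : ℝ) / n) →
      -- conclusion
      |mInner
          ((ThetaMat Uh Vh * (ThetaMat Uh Vh)ᵀ - ThetaMat U V * (ThetaMat U V)ᵀ) *
              dilation M *
            (ThetaMat Uh Vh * (ThetaMat Uh Vh)ᵀ - ThetaMat U V * (ThetaMat U V)ᵀ))
          (Ttil T)| ≤
        C₅ * (4 / ε ^ 2) * frobNorm T * κ * σ *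
          Real.sqrt ((max d1 d2 : ℝ) * r * Real.log (max d1 d2 : ℝ) / n) *
          ((σ / lamr) * Real.sqrt ((max d1 d2 : ℝ) * Real.log (max d1 d2 : ℝ) / n)) := by
  intro C₁ hC₁
  refine ⟨24 * C₁ ^ 2 + 1, by positivity, ?_⟩
  intro d1 d2 r n ε σ lamr κ M T Zhat U V sval Uh Vh sh
  intro hd1 hd2 hr hn hε hε1 hσ hlamr hU hV hM hsval hopM hκ hUh hVh hmin hz2 hZb
  classical
  set z := opNorm Zhat with hzdef
  have hz0 : 0 ≤ z := A7.opNorm_nonneg Zhat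
  set 𝔸 : Matrix (Fin d1) (Fin d2) ℝ := M + Zhat with h𝔸
  obtain ⟨hi, hii, hiv, hvv, hiii⟩ :=
    A7.bestApprox (𝔸 := 𝔸) (r := r) (by simp) hUh hVh hmin
  have hshl : ∀ j, lamr / 2 ≤ |sh j| :=
    A7.sh_lower hU hV hM (fun t => (hsval t).1) hlamr hz2 h𝔸 hUh hVh hiv hiii
  have hres : opNorm (𝔸 - Uh * Matrix.diagonal sh * Vhᵀ) ≤ z := by
    have h := A7.residual_opNorm_le hU hV hM h𝔸 hUh hVh hiv hvv hiii
    rwa [hi] at h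
  set R : Matrix (Fin d1) (Fin d2) ℝ := 𝔸 - Uh * Matrix.diagonal sh * Vhᵀ with hRdef
  set Θ := ThetaMat U V with hΘdef
  set Θh := ThetaMat Uh Vh with hΘhdef
  set K0 : Matrix (Fin r ⊕ Fin r) (Fin r ⊕ Fin r) ℝ :=
    Matrix.fromBlocks 0 (Matrix.diagonal sval) (Matrix.diagonal sval) 0 with hK0def
  set Kh : Matrix (Fin r ⊕ Fin r) (Fin r ⊕ Fin r) ℝ :=
    Matrix.fromBlocks 0 (Matrix.diagonal sh) (Matrix.diagonal sh) 0 with hKhdef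
  have hΘt : Θᵀ * Θ = 1 := by
    rw [hΘdef, ThetaMat, Matrix.fromBlocks_transpose, Matrix.fromBlocks_multiply]
    simp [hU, hV, Matrix.fromBlocks_one]
  have hΘht : Θhᵀ * Θh = 1 := by
    rw [hΘhdef, ThetaMat, Matrix.fromBlocks_transpose, Matrix.fromBlocks_multiply]
    simp [hUh, hVh, Matrix.fromBlocks_one]
  have hAd : dilation M = Θ * K0 * Θᵀ := by
    rw [hΘdef, ThetaMat, hK0def, dilation, hM]
    rw [Matrix.fromBlocks_transpose, Matrix.fromBlocks_multiply, Matrix.fromBlocks_multiply]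
    simp [Matrix.transpose_mul, Matrix.diagonal_transpose, Matrix.mul_assoc]
  have hAdd : dilation 𝔸 = dilation M + dilation Zhat := by
    rw [h𝔸, dilation, dilation, dilation, Matrix.fromBlocks_add]
    simp [Matrix.transpose_add]
  have hivT : 𝔸ᵀ * Uh = Vh * Matrix.diagonal sh := by
    simpa [Matrix.transpose_mul, Matrix.diagonal_transpose] using
      congrArg Matrix.transpose hvv
  have hAdΘh : dilation 𝔸 * Θh = Θh * Kh := by
    rw [hΘhdef, ThetaMat, hKhdef, dilation]
    rw [Matrix.fromBlocks_multiply, Matrix.fromBlocks_multiply]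
    simp [hiv, hivT]
  have hAdΘ : dilation M * Θ = Θ * K0 := by
    rw [hAd, Matrix.mul_assoc, hΘt, Matrix.mul_one]
  -- projections and residual in dilated space
  have hPhΘh : (1 - Θh * Θhᵀ) * Θh = 0 := by
    rw [Matrix.sub_mul, Matrix.one_mul, Matrix.mul_assoc, hΘht, Matrix.mul_one, sub_self]
  have hPΘ : (1 - Θ * Θᵀ) * Θ = 0 := by
    rw [Matrix.sub_mul, Matrix.one_mul, Matrix.mul_assoc, hΘt, Matrix.mul_one, sub_self]
  have hblock : (1 - Uh * Uhᵀ) * 𝔸 * (1 - Vh * Vhᵀ) = R := by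
    have e1 : (Uh * Uhᵀ) * 𝔸 * (Vh * Vhᵀ) = Uh * Matrix.diagonal sh * Vhᵀ := by
      rw [hii, Matrix.mul_assoc (Uh * Matrix.diagonal sh) Vhᵀ (Vh * Vhᵀ),
        ← Matrix.mul_assoc Vhᵀ Vh Vhᵀ, hVh, Matrix.one_mul]
    calc (1 - Uh * Uhᵀ) * 𝔸 * (1 - Vh * Vhᵀ)
        = 𝔸 - 𝔸 * (Vh * Vhᵀ) - (Uh * Uhᵀ) * 𝔸 + (Uh * Uhᵀ) * 𝔸 * (Vh * Vhᵀ) := by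
          rw [Matrix.sub_mul, Matrix.one_mul, Matrix.mul_sub, Matrix.mul_one, Matrix.sub_mul]
          abel
      _ = R := by rw [e1, hi, hii, hRdef]; abel
  have hblockT : (1 - Vh * Vhᵀ) * 𝔸ᵀ * (1 - Uh * Uhᵀ) = Rᵀ := by
    have h := congrArg Matrix.transpose hblock
    rw [Matrix.transpose_mul, Matrix.transpose_mul, A7.oneSub_proj_symm,
      A7.oneSub_proj_symm, ← Matrix.mul_assoc] at h
    exact h
  have h1Ph : (1 : Matrix (Fin d1 ⊕ Fin d2) (Fin d1 ⊕ Fin d2) ℝ) - Θh * Θhᵀ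
      = Matrix.fromBlocks (1 - Uh * Uhᵀ) 0 0 (1 - Vh * Vhᵀ) := by
    have hb : Θh * Θhᵀ = Matrix.fromBlocks (Uh * Uhᵀ) 0 0 (Vh * Vhᵀ) := by
      rw [hΘhdef, ThetaMat, Matrix.fromBlocks_transpose, Matrix.fromBlocks_multiply]
      simp
    rw [hb, ← Matrix.fromBlocks_one (l := Fin d1) (m := Fin d2) (α := ℝ)]
    rw [sub_eq_add_neg, Matrix.fromBlocks_neg, Matrix.fromBlocks_add]
    simp [sub_eq_add_neg]
  have hRd : (1 - Θh * Θhᵀ) * dilation 𝔸 * (1 - Θh * Θhᵀ) = dilation R := by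
    rw [h1Ph, dilation, dilation, Matrix.fromBlocks_multiply, Matrix.fromBlocks_multiply]
    simp [hblock, hblockT]
  -- operator norm facts
  have hopΘ : opNorm Θ ≤ 1 := A7.opNorm_colOrtho_le hΘt
  have hopΘh : opNorm Θh ≤ 1 := A7.opNorm_colOrtho_le hΘht
  have hopΘT : opNorm Θᵀ ≤ 1 := by rw [A7.opNorm_transpose]; exact hopΘ
  have hopΘhT : opNorm Θhᵀ ≤ 1 := by rw [A7.opNorm_transpose]; exact hopΘh
  have hop1Ph : opNorm (1 - Θh * Θhᵀ) ≤ 1 := A7.opNorm_oneSub_proj_le hΘht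
  have hop1P : opNorm (1 - Θ * Θᵀ) ≤ 1 := A7.opNorm_oneSub_proj_le hΘt
  have hopZd : opNorm (dilation Zhat) ≤ z := by
    rw [dilation]
    exact A7.opNorm_offdiag_blocks_le hz0 le_rfl (le_of_eq (A7.opNorm_transpose Zhat))
  have hopRd : opNorm ((1 - Θh * Θhᵀ) * dilation 𝔸 * (1 - Θh * Θhᵀ)) ≤ z := by
    rw [hRd, dilation]
    exact A7.opNorm_offdiag_blocks_le hz0 hres
      (by rw [A7.opNorm_transpose]; exact hres)
  have hopAd : opNorm (dilation M) ≤ 1 := by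
    rw [dilation]
    exact A7.opNorm_offdiag_blocks_le zero_le_one (le_of_eq hopM)
      (by rw [A7.opNorm_transpose]; exact le_of_eq hopM)
  -- inverses of K0 and Kh
  have hsvalpos : ∀ i, 0 < sval i := fun i => lt_of_lt_of_le hlamr (hsval i).1
  set K0inv : Matrix (Fin r ⊕ Fin r) (Fin r ⊕ Fin r) ℝ :=
    Matrix.fromBlocks 0 (Matrix.diagonal fun i => (sval i)⁻¹)
      (Matrix.diagonal fun i => (sval i)⁻¹) 0 with hK0invdef
  have hK0K0inv : K0 * K0inv = 1 := by
    rw [hK0def, hK0invdef, Matrix.fromBlocks_multiply]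
    have hd : Matrix.diagonal sval * Matrix.diagonal (fun i => (sval i)⁻¹)
        = (1 : Matrix (Fin r) (Fin r) ℝ) := by
      rw [Matrix.diagonal_mul_diagonal]
      have : (fun i => sval i * (sval i)⁻¹) = fun _ => (1 : ℝ) :=
        funext fun i => mul_inv_cancel₀ (ne_of_gt (hsvalpos i))
      rw [this, Matrix.diagonal_one]
    simp [hd, Matrix.fromBlocks_one]
  have hopK0inv : opNorm K0inv ≤ lamr⁻¹ := by
    rw [hK0invdef]
    have hdiagb : opNorm (Matrix.diagonal fun i => (sval i)⁻¹) ≤ lamr⁻¹ := by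
      refine A7.opNorm_diagonal_le (inv_nonneg.2 hlamr.le) fun i => ?_
      rw [abs_of_pos (inv_pos.2 (hsvalpos i))]
      exact inv_anti₀ hlamr (hsval i).1
    exact A7.opNorm_offdiag_blocks_le (inv_nonneg.2 hlamr.le) hdiagb hdiagb
  have hshpos : ∀ j, 0 < |sh j| := fun j => lt_of_lt_of_le (by linarith) (hshl j)
  set Khinv : Matrix (Fin r ⊕ Fin r) (Fin r ⊕ Fin r) ℝ :=
    Matrix.fromBlocks 0 (Matrix.diagonal fun j => (sh j)⁻¹)
      (Matrix.diagonal fun j => (sh j)⁻¹) 0 with hKhinvdef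
  have hKhKhinv : Kh * Khinv = 1 := by
    rw [hKhdef, hKhinvdef, Matrix.fromBlocks_multiply]
    have hd : Matrix.diagonal sh * Matrix.diagonal (fun j => (sh j)⁻¹)
        = (1 : Matrix (Fin r) (Fin r) ℝ) := by
      rw [Matrix.diagonal_mul_diagonal]
      have : (fun j => sh j * (sh j)⁻¹) = fun _ => (1 : ℝ) :=
        funext fun j => mul_inv_cancel₀ (fun h => by simpa [h] using hshpos j)
      rw [this, Matrix.diagonal_one]
    simp [hd, Matrix.fromBlocks_one]
  have hopKhinv : opNorm Khinv ≤ (lamr / 2)⁻¹ := by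
    rw [hKhinvdef]
    have h2 : (0:ℝ) < lamr / 2 := by linarith
    have hdiagb : opNorm (Matrix.diagonal fun j => (sh j)⁻¹) ≤ (lamr / 2)⁻¹ := by
      refine A7.opNorm_diagonal_le (inv_nonneg.2 h2.le) fun j => ?_
      rw [abs_inv]
      exact inv_anti₀ h2 (hshl j)
    exact A7.opNorm_offdiag_blocks_le (inv_nonneg.2 h2.le) hdiagb hdiagb
  -- bound on Q = (1 - Ph) Θ
  have hPh0 : ((1 - Θh * Θhᵀ) * dilation 𝔸) * (Θh * Θhᵀ) = 0 := by
    rw [← Matrix.mul_assoc, Matrix.mul_assoc (1 - Θh * Θhᵀ) (dilation 𝔸) Θh, hAdΘh,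
      ← Matrix.mul_assoc, hPhΘh, Matrix.zero_mul, Matrix.zero_mul]
  have hRdA : (1 - Θh * Θhᵀ) * dilation 𝔸 * (1 - Θh * Θhᵀ)
      = (1 - Θh * Θhᵀ) * dilation 𝔸 := by
    rw [Matrix.mul_sub, Matrix.mul_one, hPh0, sub_zero]
  have hQK0 : ((1 - Θh * Θhᵀ) * Θ) * K0
      = ((1 - Θh * Θhᵀ) * dilation 𝔸 * (1 - Θh * Θhᵀ)) * ((1 - Θh * Θhᵀ) * Θ)
        - (1 - Θh * Θhᵀ) * dilation Zhat * Θ := by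
    have c1 : ((1 - Θh * Θhᵀ) * Θ) * K0 = (1 - Θh * Θhᵀ) * (dilation M * Θ) := by
      rw [Matrix.mul_assoc, ← hAdΘ]
    have c2 : ((1 - Θh * Θhᵀ) * dilation 𝔸 * (1 - Θh * Θhᵀ)) * ((1 - Θh * Θhᵀ) * Θ)
        = (1 - Θh * Θhᵀ) * (dilation 𝔸 * Θ) := by
      rw [hRdA, ← Matrix.mul_assoc, hRdA, Matrix.mul_assoc]
    have c3 : (1 - Θh * Θhᵀ) * (dilation M * Θ)
        = (1 - Θh * Θhᵀ) * (dilation 𝔸 * Θ) - (1 - Θh * Θhᵀ) * dilation Zhat * Θ := by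
      rw [hAdd, Matrix.add_mul, Matrix.mul_add, Matrix.mul_assoc]
      abel
    rw [c1, c3, c2]
  have hQB : lamr * opNorm ((1 - Θh * Θhᵀ) * Θ) ≤ 2 * z := by
    have hq1 : opNorm (((1 - Θh * Θhᵀ) * Θ) * K0)
        ≤ z * opNorm ((1 - Θh * Θhᵀ) * Θ) + z := by
      rw [hQK0]
      refine le_trans (A7.opNorm_sub_le _ _) (add_le_add ?_ ?_)
      · calc opNorm (((1 - Θh * Θhᵀ) * dilation 𝔸 * (1 - Θh * Θhᵀ)) * ((1 - Θh * Θhᵀ) * Θ))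
            ≤ opNorm ((1 - Θh * Θhᵀ) * dilation 𝔸 * (1 - Θh * Θhᵀ))
              * opNorm ((1 - Θh * Θhᵀ) * Θ) := A7.opNorm_mul_le _ _
          _ ≤ z * opNorm ((1 - Θh * Θhᵀ) * Θ) :=
              mul_le_mul_of_nonneg_right hopRd (A7.opNorm_nonneg _)
      · calc opNorm ((1 - Θh * Θhᵀ) * dilation Zhat * Θ)
            ≤ opNorm ((1 - Θh * Θhᵀ) * dilation Zhat) * opNorm Θ := A7.opNorm_mul_le _ _
          _ ≤ opNorm ((1 - Θh * Θhᵀ) * dilation Zhat) * 1 :=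
              mul_le_mul_of_nonneg_left hopΘ (A7.opNorm_nonneg _)
          _ = opNorm ((1 - Θh * Θhᵀ) * dilation Zhat) := mul_one _
          _ ≤ opNorm (1 - Θh * Θhᵀ) * opNorm (dilation Zhat) := A7.opNorm_mul_le _ _
          _ ≤ 1 * z := mul_le_mul hop1Ph hopZd (A7.opNorm_nonneg _) zero_le_one
          _ = z := one_mul _
    have hq2 : opNorm ((1 - Θh * Θhᵀ) * Θ)
        ≤ opNorm (((1 - Θh * Θhᵀ) * Θ) * K0) * lamr⁻¹ := by
      have heq : (1 - Θh * Θhᵀ) * Θ = (((1 - Θh * Θhᵀ) * Θ) * K0) * K0inv := by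
        rw [Matrix.mul_assoc, hK0K0inv, Matrix.mul_one]
      calc opNorm ((1 - Θh * Θhᵀ) * Θ)
          = opNorm ((((1 - Θh * Θhᵀ) * Θ) * K0) * K0inv) := by rw [← heq]
        _ ≤ opNorm (((1 - Θh * Θhᵀ) * Θ) * K0) * opNorm K0inv := A7.opNorm_mul_le _ _
        _ ≤ opNorm (((1 - Θh * Θhᵀ) * Θ) * K0) * lamr⁻¹ :=
            mul_le_mul_of_nonneg_left hopK0inv (A7.opNorm_nonneg _)
    set q := opNorm ((1 - Θh * Θhᵀ) * Θ) with hqdef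
    have hq0 : 0 ≤ q := A7.opNorm_nonneg _
    have hqz : q ≤ (z * q + z) * lamr⁻¹ :=
      le_trans hq2 (mul_le_mul_of_nonneg_right hq1 (inv_nonneg.2 hlamr.le))
    have h2 : q * lamr ≤ z * q + z := by
      have := mul_le_mul_of_nonneg_right hqz hlamr.le
      rwa [mul_assoc, inv_mul_cancel₀ (ne_of_gt hlamr), mul_one] at this
    have h3 : z * q ≤ (lamr / 2) * q :=
      mul_le_mul_of_nonneg_right (show z ≤ lamr / 2 by linarith) hq0
    nlinarith [h2, h3]
  -- bound on Q' = (1 - P) Θh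
  have hPA0 : (1 - Θ * Θᵀ) * dilation M = 0 := by
    rw [hAd, ← Matrix.mul_assoc, ← Matrix.mul_assoc, hPΘ, Matrix.zero_mul, Matrix.zero_mul]
  have hQ'Kh : ((1 - Θ * Θᵀ) * Θh) * Kh = (1 - Θ * Θᵀ) * dilation Zhat * Θh := by
    have c1 : ((1 - Θ * Θᵀ) * Θh) * Kh = (1 - Θ * Θᵀ) * (dilation 𝔸 * Θh) := by
      rw [Matrix.mul_assoc, ← hAdΘh]
    rw [c1, hAdd, Matrix.add_mul, Matrix.mul_add, ← Matrix.mul_assoc, hPA0,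
      Matrix.zero_mul, zero_add, Matrix.mul_assoc]
  have hQ'B : lamr * opNorm ((1 - Θ * Θᵀ) * Θh) ≤ 2 * z := by
    have hq1 : opNorm (((1 - Θ * Θᵀ) * Θh) * Kh) ≤ z := by
      rw [hQ'Kh]
      calc opNorm ((1 - Θ * Θᵀ) * dilation Zhat * Θh)
          ≤ opNorm ((1 - Θ * Θᵀ) * dilation Zhat) * opNorm Θh := A7.opNorm_mul_le _ _
        _ ≤ opNorm ((1 - Θ * Θᵀ) * dilation Zhat) * 1 :=
            mul_le_mul_of_nonneg_left hopΘh (A7.opNorm_nonneg _)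
        _ = opNorm ((1 - Θ * Θᵀ) * dilation Zhat) := mul_one _
        _ ≤ opNorm (1 - Θ * Θᵀ) * opNorm (dilation Zhat) := A7.opNorm_mul_le _ _
        _ ≤ 1 * z := mul_le_mul hop1P hopZd (A7.opNorm_nonneg _) zero_le_one
        _ = z := one_mul _
    have hq2 : opNorm ((1 - Θ * Θᵀ) * Θh) ≤ z * (lamr / 2)⁻¹ := by
      have heq : (1 - Θ * Θᵀ) * Θh = (((1 - Θ * Θᵀ) * Θh) * Kh) * Khinv := by
        rw [Matrix.mul_assoc, hKhKhinv, Matrix.mul_one]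
      calc opNorm ((1 - Θ * Θᵀ) * Θh)
          = opNorm ((((1 - Θ * Θᵀ) * Θh) * Kh) * Khinv) := by rw [← heq]
        _ ≤ opNorm (((1 - Θ * Θᵀ) * Θh) * Kh) * opNorm Khinv := A7.opNorm_mul_le _ _
        _ ≤ z * (lamr / 2)⁻¹ := by
            refine mul_le_mul hq1 hopKhinv (A7.opNorm_nonneg _) hz0
    have hval : lamr * (z * (lamr / 2)⁻¹) = 2 * z := by
      field_simp
    calc lamr * opNorm ((1 - Θ * Θᵀ) * Θh) ≤ lamr * (z * (lamr / 2)⁻¹) :=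
          mul_le_mul_of_nonneg_left hq2 hlamr.le
      _ = 2 * z := hval
  -- difference of projections
  have hXdec : Θh * Θhᵀ - Θ * Θᵀ
      = ((1 - Θ * Θᵀ) * Θh) * Θhᵀ - (((1 - Θh * Θhᵀ) * Θ) * Θᵀ)ᵀ := by
    have e1 : ((1 - Θ * Θᵀ) * Θh) * Θhᵀ = Θh * Θhᵀ - (Θ * Θᵀ) * (Θh * Θhᵀ) := by
      rw [Matrix.sub_mul, Matrix.one_mul, Matrix.sub_mul, Matrix.mul_assoc (Θ * Θᵀ) Θh Θhᵀ]
    have e2 : (((1 - Θh * Θhᵀ) * Θ) * Θᵀ)ᵀ = Θ * Θᵀ - (Θ * Θᵀ) * (Θh * Θhᵀ) := by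
      rw [Matrix.transpose_mul, Matrix.transpose_mul, A7.oneSub_proj_symm,
        Matrix.transpose_transpose]
      rw [Matrix.mul_sub, Matrix.mul_one, Matrix.mul_sub, ← Matrix.mul_assoc]
    rw [e1, e2]
    abel
  have hopQ'T : opNorm (((1 - Θ * Θᵀ) * Θh) * Θhᵀ) ≤ opNorm ((1 - Θ * Θᵀ) * Θh) := by
    calc opNorm (((1 - Θ * Θᵀ) * Θh) * Θhᵀ)
        ≤ opNorm ((1 - Θ * Θᵀ) * Θh) * opNorm Θhᵀ := A7.opNorm_mul_le _ _
      _ ≤ opNorm ((1 - Θ * Θᵀ) * Θh) * 1 :=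
          mul_le_mul_of_nonneg_left hopΘhT (A7.opNorm_nonneg _)
      _ = opNorm ((1 - Θ * Θᵀ) * Θh) := mul_one _
  have hopQT : opNorm ((((1 - Θh * Θhᵀ) * Θ) * Θᵀ)ᵀ) ≤ opNorm ((1 - Θh * Θhᵀ) * Θ) := by
    rw [A7.opNorm_transpose]
    calc opNorm (((1 - Θh * Θhᵀ) * Θ) * Θᵀ)
        ≤ opNorm ((1 - Θh * Θhᵀ) * Θ) * opNorm Θᵀ := A7.opNorm_mul_le _ _
      _ ≤ opNorm ((1 - Θh * Θhᵀ) * Θ) * 1 :=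
          mul_le_mul_of_nonneg_left hopΘT (A7.opNorm_nonneg _)
      _ = opNorm ((1 - Θh * Θhᵀ) * Θ) := mul_one _
  have hopX : lamr * opNorm (Θh * Θhᵀ - Θ * Θᵀ) ≤ 4 * z := by
    have h1 : opNorm (Θh * Θhᵀ - Θ * Θᵀ)
        ≤ opNorm ((1 - Θ * Θᵀ) * Θh) + opNorm ((1 - Θh * Θhᵀ) * Θ) := by
      rw [hXdec]
      exact le_trans (A7.opNorm_sub_le _ _) (add_le_add hopQ'T hopQT)
    have h2 := mul_le_mul_of_nonneg_left h1 hlamr.le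
    calc lamr * opNorm (Θh * Θhᵀ - Θ * Θᵀ)
        ≤ lamr * (opNorm ((1 - Θ * Θᵀ) * Θh) + opNorm ((1 - Θh * Θhᵀ) * Θ)) := h2
      _ = lamr * opNorm ((1 - Θ * Θᵀ) * Θh) + lamr * opNorm ((1 - Θh * Θhᵀ) * Θ) := by ring
      _ ≤ 2 * z + 2 * z := add_le_add hQ'B hQB
      _ = 4 * z := by ring
  -- Frobenius bound
  have hcard : ((Fintype.card (Fin r ⊕ Fin r)) : ℝ) = 2 * r := by
    simp [Fintype.card_sum]
    ring
  have hfrobQ' : frobNorm ((1 - Θ * Θᵀ) * Θh)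
      ≤ Real.sqrt (2 * r) * opNorm ((1 - Θ * Θᵀ) * Θh) := by
    have := A7.frobNorm_le_sqrt_card_mul ((1 - Θ * Θᵀ) * Θh)
    rwa [hcard] at this
  have hfrobQ : frobNorm ((1 - Θh * Θhᵀ) * Θ)
      ≤ Real.sqrt (2 * r) * opNorm ((1 - Θh * Θhᵀ) * Θ) := by
    have := A7.frobNorm_le_sqrt_card_mul ((1 - Θh * Θhᵀ) * Θ)
    rwa [hcard] at this
  have hfX : lamr * frobNorm (Θh * Θhᵀ - Θ * Θᵀ) ≤ Real.sqrt (2 * r) * (4 * z) := by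
    have h1 : frobNorm (Θh * Θhᵀ - Θ * Θᵀ)
        ≤ Real.sqrt (2 * r) * (opNorm ((1 - Θ * Θᵀ) * Θh) + opNorm ((1 - Θh * Θhᵀ) * Θ)) := by
      rw [hXdec]
      refine le_trans (A7.frobNorm_sub_le _ _) ?_
      have e1 : frobNorm (((1 - Θ * Θᵀ) * Θh) * Θhᵀ) ≤ frobNorm ((1 - Θ * Θᵀ) * Θh) := by
        refine le_trans (A7.frobNorm_mul_le_right _ _) ?_
        exact mul_le_of_le_one_right (A7.frobNorm_nonneg _) hopΘhT
      have e2 : frobNorm ((((1 - Θh * Θhᵀ) * Θ) * Θᵀ)ᵀ) ≤ frobNorm ((1 - Θh * Θhᵀ) * Θ) := by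
        rw [A7.frobNorm_transpose]
        refine le_trans (A7.frobNorm_mul_le_right _ _) ?_
        exact mul_le_of_le_one_right (A7.frobNorm_nonneg _) hopΘT
      calc frobNorm (((1 - Θ * Θᵀ) * Θh) * Θhᵀ) + frobNorm ((((1 - Θh * Θhᵀ) * Θ) * Θᵀ)ᵀ)
          ≤ frobNorm ((1 - Θ * Θᵀ) * Θh) + frobNorm ((1 - Θh * Θhᵀ) * Θ) := add_le_add e1 e2
        _ ≤ Real.sqrt (2 * r) * opNorm ((1 - Θ * Θᵀ) * Θh)
            + Real.sqrt (2 * r) * opNorm ((1 - Θh * Θhᵀ) * Θ) := add_le_add hfrobQ' hfrobQ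
        _ = Real.sqrt (2 * r) * (opNorm ((1 - Θ * Θᵀ) * Θh) + opNorm ((1 - Θh * Θhᵀ) * Θ)) := by
            ring
    have h2 := mul_le_mul_of_nonneg_left h1 hlamr.le
    calc lamr * frobNorm (Θh * Θhᵀ - Θ * Θᵀ)
        ≤ lamr * (Real.sqrt (2 * r) * (opNorm ((1 - Θ * Θᵀ) * Θh)
          + opNorm ((1 - Θh * Θhᵀ) * Θ))) := h2
      _ = Real.sqrt (2 * r) * (lamr * opNorm ((1 - Θ * Θᵀ) * Θh)
          + lamr * opNorm ((1 - Θh * Θhᵀ) * Θ)) := by ring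
      _ ≤ Real.sqrt (2 * r) * (2 * z + 2 * z) := by
          refine mul_le_mul_of_nonneg_left (add_le_add hQ'B hQB) (Real.sqrt_nonneg _)
      _ = Real.sqrt (2 * r) * (4 * z) := by ring
  -- Frobenius norm of the tilde matrix
  have hTt : frobNorm (Ttil T) = frobNorm T := by
    rw [A7.frobNorm_eq, A7.frobNorm_eq]
    congr 1
    rw [Ttil, A7.fsq, A7.fsq]
    rw [Fintype.sum_sum_type]
    simp [Fintype.sum_sum_type, Matrix.fromBlocks_apply₁₁, Matrix.fromBlocks_apply₁₂,
      Matrix.fromBlocks_apply₂₁, Matrix.fromBlocks_apply₂₂]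
  -- core Cauchy-Schwarz estimate
  have hcore : |mInner ((Θh * Θhᵀ - Θ * Θᵀ) * dilation M * (Θh * Θhᵀ - Θ * Θᵀ)) (Ttil T)|
      ≤ opNorm (Θh * Θhᵀ - Θ * Θᵀ) * frobNorm (Θh * Θhᵀ - Θ * Θᵀ) * frobNorm T := by
    have h1 := A7.abs_mInner_le ((Θh * Θhᵀ - Θ * Θᵀ) * dilation M * (Θh * Θhᵀ - Θ * Θᵀ))
      (Ttil T)
    rw [hTt] at h1
    have h2 : frobNorm ((Θh * Θhᵀ - Θ * Θᵀ) * dilation M * (Θh * Θhᵀ - Θ * Θᵀ))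
        ≤ opNorm (Θh * Θhᵀ - Θ * Θᵀ) * frobNorm (Θh * Θhᵀ - Θ * Θᵀ) := by
      rw [Matrix.mul_assoc]
      refine le_trans (A7.frobNorm_mul_le_left _ _) ?_
      refine mul_le_mul_of_nonneg_left ?_ (A7.opNorm_nonneg _)
      refine le_trans (A7.frobNorm_mul_le_left _ _) ?_
      exact mul_le_of_le_one_left (A7.frobNorm_nonneg _) hopAd
    exact le_trans h1 (mul_le_mul_of_nonneg_right h2 (A7.frobNorm_nonneg T))
  -- final arithmetic
  set s : ℝ := Real.sqrt ((max d1 d2 : ℝ) * Real.log (max d1 d2 : ℝ) / n) with hsdef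
  have hD1 : (1 : ℝ) ≤ (max d1 d2 : ℝ) := by
    have : (1 : ℝ) ≤ (d1 : ℝ) := by exact_mod_cast hd1
    exact le_trans this (le_max_left _ _)
  have hlog0 : 0 ≤ Real.log (max d1 d2 : ℝ) := Real.log_nonneg hD1
  have harg0 : 0 ≤ (max d1 d2 : ℝ) * Real.log (max d1 d2 : ℝ) / n :=
    div_nonneg (mul_nonneg (le_trans zero_le_one hD1) hlog0) (Nat.cast_nonneg n)
  have hs0 : 0 ≤ s := Real.sqrt_nonneg _
  have hs2 : s ^ 2 = (max d1 d2 : ℝ) * Real.log (max d1 d2 : ℝ) / n := Real.sq_sqrt harg0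
  have hrs : Real.sqrt ((max d1 d2 : ℝ) * r * Real.log (max d1 d2 : ℝ) / n)
      = Real.sqrt r * s := by
    rw [hsdef, ← Real.sqrt_mul (Nat.cast_nonneg r)]
    congr 1
    ring
  set sr : ℝ := Real.sqrt r with hsrdef
  have hsr0 : 0 ≤ sr := Real.sqrt_nonneg _
  have hsqrt2r : Real.sqrt (2 * (r : ℝ)) = Real.sqrt 2 * sr := Real.sqrt_mul (by norm_num) _
  have hs2le : Real.sqrt 2 ≤ 1.5 := by
    have h := Real.sqrt_le_sqrt (show (2 : ℝ) ≤ 1.5 ^ 2 by norm_num)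
    rwa [Real.sqrt_sq (by norm_num)] at h
  have hzsq : z ^ 2 ≤ C₁ ^ 2 * (4 / ε ^ 2) * σ ^ 2 * s ^ 2 := by
    calc z ^ 2 ≤ (C₁ * (2 / ε) * σ * s) ^ 2 := pow_le_pow_left₀ hz0 hZb 2
      _ = C₁ ^ 2 * (4 / ε ^ 2) * σ ^ 2 * s ^ 2 := by ring
  set fT : ℝ := frobNorm T with hfTdef
  have hfT0 : 0 ≤ fT := A7.frobNorm_nonneg T
  set oX : ℝ := opNorm (Θh * Θhᵀ - Θ * Θᵀ) with hoXdef
  set fX : ℝ := frobNorm (Θh * Θhᵀ - Θ * Θᵀ) with hfXdef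
  have hoX0 : 0 ≤ oX := A7.opNorm_nonneg _
  have hfX0 : 0 ≤ fX := A7.frobNorm_nonneg _
  have hA1 : lamr ^ 2 * (oX * fX) ≤ (4 * z) * (Real.sqrt (2 * r) * (4 * z)) := by
    calc lamr ^ 2 * (oX * fX) = (lamr * oX) * (lamr * fX) := by ring
      _ ≤ (4 * z) * (Real.sqrt (2 * r) * (4 * z)) := by
          refine mul_le_mul hopX hfX (mul_nonneg hlamr.le hfX0) (by linarith)
  have hA2 : (4 * z) * (Real.sqrt (2 * r) * (4 * z)) = 16 * Real.sqrt 2 * sr * z ^ 2 := by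
    rw [hsqrt2r]
    ring
  have h24 : 16 * Real.sqrt 2 ≤ 24 := by linarith [hs2le]
  have hA3 : 16 * Real.sqrt 2 * sr * z ^ 2 ≤ 24 * sr * z ^ 2 := by
    calc 16 * Real.sqrt 2 * sr * z ^ 2 = (16 * Real.sqrt 2) * (sr * z ^ 2) := by ring
      _ ≤ 24 * (sr * z ^ 2) :=
          mul_le_mul_of_nonneg_right h24 (mul_nonneg hsr0 (sq_nonneg z))
      _ = 24 * sr * z ^ 2 := by ring
  have hA4 : 24 * sr * z ^ 2 ≤ 24 * sr * (C₁ ^ 2 * (4 / ε ^ 2) * σ ^ 2 * s ^ 2) :=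
    mul_le_mul_of_nonneg_left hzsq (by positivity)
  -- put everything together
  rw [hrs, hκ]
  have hpos2 : (0 : ℝ) < lamr ^ 2 := pow_pos hlamr 2
  refine le_of_mul_le_mul_right ?_ hpos2
  have hRHS : (24 * C₁ ^ 2 + 1) * (4 / ε ^ 2) * fT * (1 / lamr) * σ * (sr * s)
      * ((σ / lamr) * s) * lamr ^ 2
      = (24 * C₁ ^ 2 + 1) * (4 / ε ^ 2) * σ ^ 2 * s ^ 2 * sr * fT := by
    field_simp
  rw [hRHS]
  calc |mInner ((Θh * Θhᵀ - Θ * Θᵀ) * dilation M * (Θh * Θhᵀ - Θ * Θᵀ)) (Ttil T)| * lamr ^ 2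
      ≤ (oX * fX * fT) * lamr ^ 2 :=
        mul_le_mul_of_nonneg_right hcore hpos2.le
    _ = (lamr ^ 2 * (oX * fX)) * fT := by ring
    _ ≤ (24 * sr * (C₁ ^ 2 * (4 / ε ^ 2) * σ ^ 2 * s ^ 2)) * fT := by
        refine mul_le_mul_of_nonneg_right ?_ hfT0
        calc lamr ^ 2 * (oX * fX) ≤ (4 * z) * (Real.sqrt (2 * r) * (4 * z)) := hA1
          _ = 16 * Real.sqrt 2 * sr * z ^ 2 := hA2
          _ ≤ 24 * sr * z ^ 2 := hA3
          _ ≤ 24 * sr * (C₁ ^ 2 * (4 / ε ^ 2) * σ ^ 2 * s ^ 2) := hA4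
    _ ≤ (24 * C₁ ^ 2 + 1) * (4 / ε ^ 2) * σ ^ 2 * s ^ 2 * sr * fT := by
        have hε2 : (0 : ℝ) ≤ 4 / ε ^ 2 := by positivity
        have hstep : 24 * C₁ ^ 2 ≤ 24 * C₁ ^ 2 + 1 := by linarith
        have hrest : (0 : ℝ) ≤ (4 / ε ^ 2) * σ ^ 2 * s ^ 2 * sr * fT := by positivity
        calc (24 * sr * (C₁ ^ 2 * (4 / ε ^ 2) * σ ^ 2 * s ^ 2)) * fT
            = (24 * C₁ ^ 2) * ((4 / ε ^ 2) * σ ^ 2 * s ^ 2 * sr * fT) := by ring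
          _ ≤ (24 * C₁ ^ 2 + 1) * ((4 / ε ^ 2) * σ ^ 2 * s ^ 2 * sr * fT) :=
              mul_le_mul_of_nonneg_right hstep hrest
          _ = (24 * C₁ ^ 2 + 1) * (4 / ε ^ 2) * σ ^ 2 * s ^ 2 * sr * fT := by ring

end
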